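/- arXiv:1608.04419 — 4 statements merged into one kernel-verified Lean document; each statement's English description precedes it below -/
import Mathlib

section
/- Let K = Q(√a₁, ..., √aₙ) be a totally real n-quadratic field of degree 2ⁿ over Q with all aᵢ positive squarefree integers. Then at least n distinct rational primes ramify in K. -/
open NumberField Matrix
open scoped symmDiff

lemma aux_trace_dvd {K : Type*} [Field K] [NumberField K] (p : ℕ) (hp : p.Prime)
    (z w : 𝓞 K) (hz : z ^ 2 = (p : ℤ) • w) :
    (p : ℤ) ∣ Algebra.trace ℤ (𝓞 K) z := by
  classical
  haveI : Fact p.Prime := ⟨hp⟩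
  set b := RingOfIntegers.basis K with hb
  rw [← ZMod.intCast_zmod_eq_zero_iff_dvd]
  rw [Algebra.trace_apply, LinearMap.trace_eq_matrix_trace ℤ b]
  set N := LinearMap.toMatrix b b (Algebra.lmul ℤ (𝓞 K) z) with hN
  have hcast : ((Matrix.trace N : ℤ) : ZMod p)
      = Matrix.trace (N.map (Int.castRingHom (ZMod p))) := by
    simp [Matrix.trace, Matrix.diag, Matrix.map_apply]
  rw [hcast]
  have hlmul : Algebra.lmul ℤ (𝓞 K) ((p : ℤ) • w) = (p : ℤ) • Algebra.lmul ℤ (𝓞 K) w := by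
    ext t
    simp [smul_mul_assoc]
    ring
  have hmulN : N * N = (p : ℤ) • LinearMap.toMatrix b b (Algebra.lmul ℤ (𝓞 K) w) := by
    rw [← LinearMap.toMatrix_mul, ← _root_.map_mul, ← pow_two, hz, hlmul, _root_.map_smul]
  have hnil : IsNilpotent (N.map (Int.castRingHom (ZMod p))) := by
    refine ⟨2, ?_⟩
    rw [pow_two, ← Matrix.map_mul, hmulN]
    ext i j
    simp only [Matrix.map_apply, Matrix.smul_apply, Matrix.zero_apply, smul_eq_mul]
    push_cast
    simp [ZMod.natCast_self]
  exact (Matrix.isNilpotent_trace_of_isNilpotent hnil).eq_zero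

lemma aux_prime_dvd_discr {K : Type*} [Field K] [NumberField K] (x : 𝓞 K) (d : ℤ) (p : ℕ)
    (hp : p.Prime) (hx : x ^ 2 = (d : 𝓞 K)) (hd : (p : ℤ) ∣ d)
    (hd2 : ¬ ((p : ℤ) * (p : ℤ) ∣ d)) :
    (p : ℤ) ∣ discr K := by
  classical
  haveI : Fact p.Prime := ⟨hp⟩
  set b := RingOfIntegers.basis K with hb
  rw [← NumberField.discr_eq_discr K b, Algebra.discr_def, ← ZMod.intCast_zmod_eq_zero_iff_dvd]
  suffices h : ((Algebra.traceMatrix ℤ (⇑b)).map (Int.cast : ℤ → ZMod p)).det = 0 by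
    have h2 := RingHom.map_det (Int.castRingHom (ZMod p)) (Algebra.traceMatrix ℤ (⇑b))
    rw [RingHom.mapMatrix_apply] at h2
    exact h2.trans h
  rw [← Matrix.exists_mulVec_eq_zero_iff]
  refine ⟨fun i => ((b.repr x i : ℤ) : ZMod p), ?_, ?_⟩
  · -- the coordinate vector of x is nonzero mod p
    intro hv
    have hall : ∀ i, (p : ℤ) ∣ b.repr x i := by
      intro i
      have h0 : ((b.repr x i : ℤ) : ZMod p) = 0 := by simpa using congrFun hv i
      rwa [ZMod.intCast_zmod_eq_zero_iff_dvd] at h0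
    set y : 𝓞 K := ∑ i, ((b.repr x i) / (p : ℤ)) • b i with hy
    have hxy : x = (p : ℤ) • y := by
      rw [hy, Finset.smul_sum]
      conv_lhs => rw [← b.sum_repr x]
      refine Finset.sum_congr rfl fun i _ => ?_
      rw [smul_smul, Int.mul_ediv_cancel' (hall i)]
    have hd' : (d : 𝓞 K) = ((p : ℤ) * (p : ℤ)) • (y * y) := by
      rw [← hx, pow_two, hxy, smul_mul_smul_comm]
    have hpK : ((p : K) * (p : K)) ≠ 0 := by
      have h1 : (p : K) ≠ 0 := Nat.cast_ne_zero.mpr hp.pos.ne'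
      exact mul_ne_zero h1 h1
    have hmap : (d : K) = ((p : K) * (p : K)) * algebraMap (𝓞 K) K (y * y) := by
      have h3 := congrArg (algebraMap (𝓞 K) K) hd'
      rw [map_intCast, map_zsmul, zsmul_eq_mul] at h3
      rw [h3]; push_cast; ring
    have hq : algebraMap ℚ K ((d : ℚ) / ((p : ℚ) * (p : ℚ)))
        = algebraMap (𝓞 K) K (y * y) := by
      rw [map_div₀, _root_.map_mul, map_intCast]
      push_cast
      rw [div_eq_iff hpK, hmap]
      ring_nf
      simp [map_pow]
    have hint : IsIntegral ℤ ((d : ℚ) / ((p : ℚ) * (p : ℚ))) := by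
      rw [← isIntegral_algebraMap_iff (algebraMap ℚ K).injective, hq]
      exact RingOfIntegers.isIntegral_coe (y * y)
    obtain ⟨m, hm⟩ := IsIntegrallyClosed.isIntegral_iff.mp hint
    apply hd2
    refine ⟨m, ?_⟩
    have hpQ : ((p : ℚ) * (p : ℚ)) ≠ 0 := by
      have h1 : (p : ℚ) ≠ 0 := Nat.cast_ne_zero.mpr hp.pos.ne'
      exact mul_ne_zero h1 h1
    rw [eq_div_iff hpQ] at hm
    simp only [algebraMap_int_eq, eq_intCast] at hm
    have hQ : (d : ℚ) = ((p : ℚ) * (p : ℚ)) * (m : ℚ) := by rw [← hm]; ring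
    exact_mod_cast hQ
  · ext i
    simp only [Pi.zero_apply]
    have key : (((Algebra.traceMatrix ℤ (⇑b) *ᵥ b.equivFun x) i : ℤ) : ZMod p) = 0 := by
      rw [Algebra.traceMatrix_of_basis_mulVec]
      rw [ZMod.intCast_zmod_eq_zero_iff_dvd]
      obtain ⟨e, he⟩ := hd
      refine aux_trace_dvd p hp _ ((e : 𝓞 K) * (b i * b i)) ?_
      rw [mul_pow, hx, he, zsmul_eq_mul]
      push_cast
      ring
    rw [← key]
    push_cast
    simp [Matrix.mulVec, dotProduct, Matrix.map_apply, Module.Basis.equivFun_apply]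

lemma aux_isSquare_of_even_factorization {m : ℕ} (hm : m ≠ 0)
    (h : ∀ p, Even (m.factorization p)) : IsSquare m := by
  classical
  refine ⟨m.factorization.prod fun p k => p ^ (k / 2), ?_⟩
  conv_lhs => rw [← Nat.factorization_prod_pow_eq_self hm]
  rw [Finsupp.prod, Finsupp.prod, ← Finset.prod_mul_distrib]
  refine Finset.prod_congr rfl fun p hp => ?_
  rw [← pow_add]
  congr 1
  obtain ⟨c, hc⟩ := h p
  omega

/-- If `K = ℚ(√a₁, ..., √aₙ)` is a totally real `n`-quadratic field of degree `2ⁿ` over `ℚ`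
with all `aᵢ` positive squarefree integers, then at least `n` distinct rational primes
ramify in `K` (i.e. divide its discriminant). -/
theorem stmt_8 (n : ℕ) (a : Fin n → ℤ) (hpos : ∀ i, 0 < a i) (hsf : ∀ i, Squarefree (a i))
    (K : Type*) [Field K] [NumberField K] (α : Fin n → K) (hα : ∀ i, (α i) ^ 2 = (a i : K))
    (hgen : ∀ x : K, x ∈ Algebra.adjoin ℚ (Set.range α))
    (hdeg : Module.finrank ℚ K = 2 ^ n) :
    n ≤ {p : ℕ | p.Prime ∧ (p : ℤ) ∣ NumberField.discr K}.ncard := by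
  classical
  -- each α i is an algebraic integer
  have hint : ∀ i, IsIntegral ℤ (α i) := by
    intro i
    refine ⟨Polynomial.X ^ 2 - Polynomial.C (a i),
      Polynomial.monic_X_pow_sub_C (a i) two_ne_zero, ?_⟩
    have : Polynomial.eval₂ (algebraMap ℤ K) (α i)
        (Polynomial.X ^ 2 - Polynomial.C (a i)) = α i ^ 2 - (a i : K) := by
      simp only [Polynomial.eval₂_sub, Polynomial.eval₂_X_pow, Polynomial.eval₂_C]
      rfl
    rw [this, hα i, sub_self]
  set x : Fin n → 𝓞 K := fun i => ⟨α i, hint i⟩ with hxdef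
  set T : Set ℕ := {p : ℕ | p.Prime ∧ (p : ℤ) ∣ discr K} with hT
  have hTfin : T.Finite := by
    refine Set.Finite.subset (Set.finite_Icc 0 (discr K).natAbs) ?_
    rintro p ⟨hp, hdvd⟩
    have h1 : p ∣ (discr K).natAbs := Int.natAbs_dvd_natAbs.mpr (by simpa using hdvd)
    exact Set.mem_Icc.mpr ⟨Nat.zero_le _,
      Nat.le_of_dvd (Int.natAbs_pos.mpr (discr_ne_zero K)) h1⟩
  set P : Set ℕ := {p : ℕ | p.Prime ∧ ∃ i, (p : ℤ) ∣ a i} with hPdef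
  have hPT : P ⊆ T := by
    rintro p ⟨hp, i, hdvd⟩
    refine ⟨hp, aux_prime_dvd_discr (x i) (a i) p hp ?_ hdvd ?_⟩
    · apply RingOfIntegers.coe_injective
      rw [map_pow, map_intCast]
      exact hα i
    · intro hcontra
      exact (Int.prime_iff_natAbs_prime.mpr (by simpa using hp)).not_unit
        (hsf i (p : ℤ) hcontra)
  have hPfin : P.Finite := hTfin.subset hPT
  refine le_trans ?_ (Set.ncard_le_ncard hPT hTfin)
  -- suffices to show n ≤ P.ncard
  by_contra hlt
  push_neg at hlt
  -- natural number versions of the a i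
  set b : Fin n → ℕ := fun i => (a i).toNat with hbdef
  have hba : ∀ i, (b i : ℤ) = a i := fun i => Int.toNat_of_nonneg (hpos i).le
  have hb0 : ∀ i, b i ≠ 0 := by
    intro i
    have h1 := hpos i
    have h2 := hba i
    intro h; rw [h] at h2; omega
  have hbsf : ∀ i, Squarefree (b i) := by
    intro i
    have := Int.squarefree_natAbs (n := a i)
    rw [show (a i).natAbs = b i by have := hba i; have := hpos i; omega] at this
    exact this.mpr (hsf i)
  -- linear dependence over ZMod 2
  set Pf : Finset ℕ := hPfin.toFinset with hPf
  set v : Fin n → ({q // q ∈ Pf} → ZMod 2) :=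
    fun i q => if (q : ℕ) ∣ b i then 1 else 0 with hv
  have hnli : ¬ LinearIndependent (ZMod 2) v := by
    intro hli
    have hcard := hli.fintype_card_le_finrank
    rw [Module.finrank_fintype_fun_eq_card, Fintype.card_coe, Fintype.card_fin] at hcard
    have : Pf.card = P.ncard := by
      rw [hPf, Set.ncard_eq_toFinset_card P hPfin]
    omega
  obtain ⟨g, hgsum, i₁, hgi⟩ := Fintype.not_linearIndependent_iff.mp hnli
  set S : Finset (Fin n) := Finset.univ.filter (fun i => g i ≠ 0) with hSdef
  have hi₁S : i₁ ∈ S := Finset.mem_filter.mpr ⟨Finset.mem_univ _, hgi⟩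
  have hg1 : ∀ i ∈ S, g i = 1 := by
    intro i hi
    have h2 : g i ≠ 0 := (Finset.mem_filter.mp hi).2
    revert h2
    have : ∀ z : ZMod 2, z ≠ 0 → z = 1 := by decide
    exact this (g i)
  set m : ℕ := ∏ i ∈ S, b i with hm
  have hm0 : m ≠ 0 := Finset.prod_ne_zero_iff.mpr fun i _ => hb0 i
  -- m is a square
  have hsquare : IsSquare m := by
    refine aux_isSquare_of_even_factorization hm0 ?_
    intro p
    by_cases hp : p.Prime
    · rw [hm, Nat.factorization_prod (fun i _ => hb0 i)]
      rw [Finset.sum_apply']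
      have hfact : ∀ i, (b i).factorization p = if p ∣ b i then 1 else 0 := by
        intro i
        by_cases hpd : p ∣ b i
        · rw [if_pos hpd]
          exact le_antisymm ((Nat.squarefree_iff_factorization_le_one (hb0 i)).mp (hbsf i) p)
            (hp.factorization_pos_of_dvd (hb0 i) hpd)
        · rw [if_neg hpd, Nat.factorization_eq_zero_of_not_dvd hpd]
      simp_rw [hfact]
      rw [Finset.sum_boole]
      by_cases hpP : p ∈ P
      · -- use the linear relation
        have hq : p ∈ Pf := hPfin.mem_toFinset.mpr hpP
        have h4 : (∑ i, g i • v i) ⟨p, hq⟩ = 0 := by rw [hgsum]; rfl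
        rw [Finset.sum_apply] at h4
        have h5 : ∑ i ∈ S, (if p ∣ b i then (1 : ZMod 2) else 0) = 0 := by
          have e1 : ∑ i ∈ S, (if p ∣ b i then (1 : ZMod 2) else 0)
              = ∑ i ∈ S, g i * (if p ∣ b i then (1 : ZMod 2) else 0) :=
            Finset.sum_congr rfl fun i hi => by rw [hg1 i hi, one_mul]
          have e2 : ∑ i ∈ S, g i * (if p ∣ b i then (1 : ZMod 2) else 0)
              = ∑ i, g i * (if p ∣ b i then (1 : ZMod 2) else 0) :=
            Finset.sum_subset (Finset.subset_univ S) (fun i _ hiS => by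
              have hg0 : g i = 0 := by
                by_contra hne
                exact hiS (Finset.mem_filter.mpr ⟨Finset.mem_univ _, hne⟩)
              rw [hg0, zero_mul])
          have e3 : ∑ i, g i * (if p ∣ b i then (1 : ZMod 2) else 0) = 0 := by
            calc ∑ i, g i * (if p ∣ b i then (1 : ZMod 2) else 0)
                = ∑ i, (g i • v i) ⟨p, hq⟩ := Finset.sum_congr rfl fun i _ => rfl
              _ = (∑ i, g i • v i) ⟨p, hq⟩ := (Finset.sum_apply _ _ _).symm
              _ = 0 := by rw [hgsum]; rfl
          rw [e1, e2, e3]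
        rw [Finset.sum_boole] at h5
        have h6 : (2 : ℕ) ∣ (S.filter (fun i => p ∣ b i)).card := by
          rwa [ZMod.natCast_eq_zero_iff] at h5
        obtain ⟨k, hk⟩ := h6
        have h7 : Even ((S.filter (fun i => p ∣ b i)).card) := ⟨k, by omega⟩
        simpa using h7
      · -- p divides no b i
        have : S.filter (fun i => p ∣ b i) = ∅ := by
          refine Finset.filter_eq_empty_iff.mpr fun i _ hdvd => ?_
          exact hpP ⟨hp, i, by rw [← hba i]; exact_mod_cast hdvd⟩
        simp [this]
    · rw [Nat.factorization_eq_zero_of_not_prime _ hp]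
      exact Even.zero
  obtain ⟨t, htt⟩ := hsquare
  -- the product of the α i over S is rational
  have hprod2 : (∏ i ∈ S, α i) ^ 2 = algebraMap ℚ K ((m : ℚ)) := by
    rw [← Finset.prod_pow]
    have : ∀ i ∈ S, α i ^ 2 = algebraMap ℚ K ((a i : ℚ)) := by
      intro i _
      rw [hα i, map_intCast]
    rw [Finset.prod_congr rfl this, ← map_prod]
    congr 1
    push_cast
    rw [hm]
    push_cast [← hba]
    rfl
  have hfac : (∏ i ∈ S, α i - algebraMap ℚ K (t : ℚ))
      * (∏ i ∈ S, α i + algebraMap ℚ K (t : ℚ)) = 0 := by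
    have : algebraMap ℚ K ((m : ℚ)) = (algebraMap ℚ K (t : ℚ)) ^ 2 := by
      rw [← map_pow]
      congr 1
      rw [htt]; push_cast; ring
    rw [mul_comm, ← sq_sub_sq, hprod2, this]
    ring
  obtain ⟨c, hc⟩ : ∃ c : ℚ, algebraMap ℚ K c = ∏ i ∈ S, α i := by
    rcases mul_eq_zero.mp hfac with h | h
    · exact ⟨(t : ℚ), by rw [← sub_eq_zero.mp h]⟩
    · exact ⟨-(t : ℚ), by rw [map_neg, ← neg_eq_of_add_eq_zero_left h]⟩
  -- the spanning set of products avoiding i₁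
  set gens : Finset K :=
    ((Finset.univ.erase i₁).powerset).image (fun Tt => ∏ i ∈ Tt, α i) with hgens
  set W : Submodule ℚ K := Submodule.span ℚ (gens : Set K) with hW
  have key1 : ∀ Tt : Finset (Fin n), Tt ⊆ Finset.univ.erase i₁ → (∏ i ∈ Tt, α i) ∈ W := by
    intro Tt hTt
    exact Submodule.subset_span (Finset.mem_coe.mpr
      (Finset.mem_image.mpr ⟨Tt, Finset.mem_powerset.mpr hTt, rfl⟩))
  -- product of two generators is in W
  have hsplit : ∀ Tt Tt' : Finset (Fin n), (∏ i ∈ Tt, α i) * (∏ i ∈ Tt', α i)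
      = (∏ i ∈ Tt ∩ Tt', (a i : ℚ)) • ∏ i ∈ Tt ∆ Tt', α i := by
    intro Tt Tt'
    rw [← Finset.prod_union_inter]
    have hu : Tt ∪ Tt' = (Tt ∆ Tt') ∪ (Tt ∩ Tt') := by
      rw [← Finset.sup_eq_union, ← symmDiff_sup_inf Tt Tt', Finset.sup_eq_union,
        Finset.inf_eq_inter]
    have hdisj : Disjoint (Tt ∆ Tt') (Tt ∩ Tt') := disjoint_symmDiff_inf Tt Tt'
    rw [hu, Finset.prod_union hdisj]
    rw [mul_assoc, ← Finset.prod_mul_distrib]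
    have : ∀ i ∈ Tt ∩ Tt', α i * α i = algebraMap ℚ K ((a i : ℚ)) := by
      intro i _
      rw [← pow_two, hα i, map_intCast]
    rw [Finset.prod_congr rfl this, ← map_prod, mul_comm, ← Algebra.smul_def]
  have hmulgen : ∀ Tt Tt' : Finset (Fin n), Tt ⊆ Finset.univ.erase i₁ →
      Tt' ⊆ Finset.univ.erase i₁ → (∏ i ∈ Tt, α i) * (∏ i ∈ Tt', α i) ∈ W := by
    intro Tt Tt' h1 h2
    rw [hsplit]
    refine Submodule.smul_mem _ _ (key1 _ ?_)
    exact le_trans symmDiff_le_sup (Finset.union_subset h1 h2)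
  have hW1 : (1 : K) ∈ W := by
    have := key1 ∅ (Finset.empty_subset _)
    simpa using this
  -- α i ∈ W for all i
  have hWα : ∀ i, α i ∈ W := by
    intro i
    by_cases hii : i = i₁
    · -- the hard case: α i₁ is a rational multiple of a generator
      subst hii
      set u : K := ∏ j ∈ S.erase i, α j with hu
      have hSsub : S.erase i ⊆ Finset.univ.erase i :=
        Finset.erase_subset_erase i (Finset.subset_univ S)
      have huW : u ∈ W := key1 _ hSsub
      set r : ℚ := ∏ j ∈ S.erase i, (a j : ℚ) with hr
      have hr0 : r ≠ 0 := by
        rw [hr]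
        refine Finset.prod_ne_zero_iff.mpr fun j _ => ?_
        exact_mod_cast (hpos j).ne'
      have hu2 : u * u = algebraMap ℚ K r := by
        rw [hu, ← Finset.prod_mul_distrib]
        have : ∀ j ∈ S.erase i, α j * α j = algebraMap ℚ K ((a j : ℚ)) := by
          intro j _
          rw [← pow_two, hα j, map_intCast]
        rw [Finset.prod_congr rfl this, ← map_prod]
      have hu0 : u ≠ 0 := by
        intro h0
        rw [h0, mul_zero] at hu2
        exact hr0 ((map_eq_zero _).mp hu2.symm)
      have hαu : α i * u = algebraMap ℚ K c := by
        rw [hu, Finset.mul_prod_erase S α hi₁S, hc]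
      have hcan : ((c / r) • u) * u = α i * u := by
        rw [smul_mul_assoc, hu2, Algebra.smul_def, ← _root_.map_mul,
          div_mul_cancel₀ _ hr0, hαu]
      have := mul_right_cancel₀ hu0 hcan
      rw [← this]
      exact Submodule.smul_mem _ _ huW
    · have : ({i} : Finset (Fin n)) ⊆ Finset.univ.erase i₁ := by
        intro j hj
        rw [Finset.mem_singleton] at hj
        subst hj
        exact Finset.mem_erase.mpr ⟨hii, Finset.mem_univ _⟩
      have := key1 {i} this
      simpa using this
  -- W is closed under multiplication
  have hWmul : ∀ z₁ z₂ : K, z₁ ∈ W → z₂ ∈ W → z₁ * z₂ ∈ W := by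
    have hsub : W * W ≤ W := by
      rw [hW, Submodule.span_mul_span]
      refine Submodule.span_le.mpr ?_
      rintro z hz
      obtain ⟨z₁, hz₁, z₂, hz₂, rfl⟩ := Set.mem_mul.mp hz
      obtain ⟨Tt, hTt, rfl⟩ := Finset.mem_image.mp (Finset.mem_coe.mp hz₁)
      obtain ⟨Tt', hTt', rfl⟩ := Finset.mem_image.mp (Finset.mem_coe.mp hz₂)
      exact hmulgen Tt Tt' (Finset.mem_powerset.mp hTt) (Finset.mem_powerset.mp hTt')
    intro z₁ z₂ h₁ h₂
    exact hsub (Submodule.mul_mem_mul h₁ h₂)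
  -- W = ⊤ via hgen
  have htop : ∀ z : K, z ∈ W := by
    intro z
    have hle : Algebra.adjoin ℚ (Set.range α) ≤ W.toSubalgebra hW1 hWmul :=
      Algebra.adjoin_le (by rintro _ ⟨i, rfl⟩; exact hWα i)
    exact hle (hgen z)
  have hspan : Submodule.span ℚ (gens : Set K) = ⊤ :=
    eq_top_iff.mpr fun z _ => htop z
  -- dimension count
  have hrank := finrank_span_finset_le_card (R := ℚ) gens
  rw [Set.finrank, hspan, finrank_top] at hrank
  have hcard : gens.card ≤ 2 ^ (n - 1) := by
    refine le_trans (Finset.card_image_le) ?_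
    rw [Finset.card_powerset, Finset.card_erase_of_mem (Finset.mem_univ i₁),
      Finset.card_univ, Fintype.card_fin]
  have hn1 : 1 ≤ n := i₁.pos
  have hpow : 2 ^ (n - 1) < 2 ^ n := Nat.pow_lt_pow_right (by norm_num) (by omega)
  rw [hdeg] at hrank
  omega
end

section
/- Let K be an imaginary n-quadratic field of degree 2ⁿ over Q. Then at least n - 1 distinct rational primes ramify in K. -/
open NumberField

lemma even_fact_isSquare (n : ℕ) (hn : n ≠ 0) (h : ∀ p, Even (n.factorization p)) :
    IsSquare n := by
  classical
  refine ⟨n.factorization.prod fun p k => p ^ (k/2), ?_⟩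
  conv_lhs => rw [← Nat.factorization_prod_pow_eq_self hn]
  rw [Finsupp.prod, Finsupp.prod, ← Finset.prod_mul_distrib]
  refine Finset.prod_congr rfl fun p _ => ?_
  obtain ⟨k, hk⟩ := h p
  rw [hk, ← pow_add]
  congr 1
  omega

lemma trace_dvd (K : Type*) [Field K] [NumberField K] (p : ℕ) (hp : p.Prime)
    (y : 𝓞 K) (h : ∃ z : 𝓞 K, y^2 = (p : 𝓞 K) * z) :
    (p : ℤ) ∣ Algebra.trace ℤ (𝓞 K) y := by
  classical
  haveI : Fact p.Prime := ⟨hp⟩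
  obtain ⟨z, hz⟩ := h
  set b := RingOfIntegers.basis K
  rw [Algebra.trace_eq_matrix_trace b y]
  rw [← ZMod.intCast_zmod_eq_zero_iff_dvd]
  set A : Matrix _ _ (ZMod p) := (Algebra.leftMulMatrix b y).map (Int.cast : ℤ → ZMod p)
  have hA2 : A ^ 2 = 0 := by
    have h2 : A ^ 2 = (Algebra.leftMulMatrix b (y^2)).map (Int.cast : ℤ → ZMod p) := by
      rw [map_pow]
      ext i j
      simp [A, pow_two, Matrix.mul_apply, Matrix.map_apply]
    have hsmul : y ^ 2 = (p : ℤ) • z := by rw [hz]; simp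
    rw [h2, hsmul, map_smul]
    ext i j
    rw [Matrix.map_apply, Matrix.smul_apply, smul_eq_mul]
    push_cast
    simp
  have hnil := (Matrix.isNilpotent_trace_of_isNilpotent ⟨2, hA2⟩).eq_zero
  rw [← hnil]
  simp [A, Matrix.trace, Matrix.diag, Matrix.map_apply]

lemma crit (K : Type*) [Field K] [NumberField K] (p : ℕ) (hp : p.Prime)
    (x : 𝓞 K) (h2 : ∃ z : 𝓞 K, x^2 = (p : 𝓞 K) * z) (h1 : ¬∃ z : 𝓞 K, x = (p : 𝓞 K) * z) :
    (p : ℤ) ∣ NumberField.discr K := by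
  classical
  haveI : Fact p.Prime := ⟨hp⟩
  set b := RingOfIntegers.basis K
  have hdisc : NumberField.discr K = (Algebra.traceMatrix ℤ ⇑b).det := by
    rw [show NumberField.discr K = Algebra.discr ℤ ⇑b from rfl, Algebra.discr_def]
  rw [hdisc, ← ZMod.intCast_zmod_eq_zero_iff_dvd]
  set M : Matrix _ _ (ZMod p) := (Algebra.traceMatrix ℤ ⇑b).map (Int.cast : ℤ → ZMod p) with hM
  have hdet : (((Algebra.traceMatrix ℤ ⇑b).det : ℤ) : ZMod p) = M.det :=
    RingHom.map_det (Int.castRingHom (ZMod p)) _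
  rw [hdet]
  rw [← Matrix.exists_vecMul_eq_zero_iff]
  refine ⟨fun i => ((b.repr x i : ℤ) : ZMod p), ?_, ?_⟩
  · -- nonzero
    intro hv
    apply h1
    have hdvd : ∀ i, (p : ℤ) ∣ b.repr x i := by
      intro i
      have := congrFun hv i
      simpa [ZMod.intCast_zmod_eq_zero_iff_dvd] using this
    choose c hc using hdvd
    refine ⟨∑ i, c i • b i, ?_⟩
    have : x = ∑ i, (b.repr x i) • b i := (b.sum_repr x).symm
    rw [this]
    rw [Finset.mul_sum]
    refine Finset.sum_congr rfl fun i _ => ?_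
    rw [hc i]
    rw [mul_smul_comm]
    rw [mul_comm, ← smul_eq_mul, smul_assoc]
    norm_num
  · -- vecMul zero
    funext j
    have hker : (p : ℤ) ∣ Algebra.trace ℤ (𝓞 K) (x * b j) := by
      apply trace_dvd K p hp
      obtain ⟨z, hz⟩ := h2
      exact ⟨z * (b j)^2, by rw [mul_pow, hz]; ring⟩
    have hsum : ∑ i, (b.repr x i) * (Algebra.traceMatrix ℤ ⇑b i j) =
        Algebra.trace ℤ (𝓞 K) (x * b j) := by
      conv_rhs => rw [← b.sum_repr x]
      rw [Finset.sum_mul, map_sum]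
      refine Finset.sum_congr rfl fun i _ => ?_
      rw [Algebra.traceMatrix_apply, Algebra.traceForm_apply, smul_mul_assoc, map_smul,
        smul_eq_mul]
    have : (Matrix.vecMul (fun i => ((b.repr x i : ℤ) : ZMod p)) M) j
        = ((∑ i, (b.repr x i) * (Algebra.traceMatrix ℤ ⇑b i j) : ℤ) : ZMod p) := by
      rw [Matrix.vecMul, dotProduct]
      push_cast
      refine Finset.sum_congr rfl fun i _ => ?_
      rw [hM]
      simp [Matrix.map_apply]
    rw [this, hsum]
    simpa [ZMod.intCast_zmod_eq_zero_iff_dvd] using hker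

lemma lemA (K : Type*) [Field K] [NumberField K] (p : ℕ) (hp : p.Prime) (N : ℤ) (hN : N ≠ 0)
    (x : K) (hx : x ^ 2 = (N : K)) (hodd : Odd (N.natAbs.factorization p)) :
    (p : ℤ) ∣ NumberField.discr K := by
  obtain ⟨k, hk⟩ := hodd
  have hNa : N.natAbs ≠ 0 := Int.natAbs_ne_zero.mpr hN
  have hppow : ((p : ℤ)) ^ (2 * k) ∣ N := by
    have h1 : p ^ (2 * k) ∣ N.natAbs :=
      dvd_trans (pow_dvd_pow p (by omega)) (Nat.ordProj_dvd N.natAbs p)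
    exact_mod_cast Int.dvd_natAbs.mp (Int.natCast_dvd_natCast.mpr h1)
  set M : ℤ := N / ((p : ℤ)) ^ (2 * k) with hMdef
  have hNM : N = ((p : ℤ)) ^ (2 * k) * M := (Int.mul_ediv_cancel' hppow).symm
  have hM0 : M ≠ 0 := fun h => hN (by rw [hNM, h, mul_zero])
  have hMa : M.natAbs ≠ 0 := Int.natAbs_ne_zero.mpr hM0
  have hfactM : M.natAbs.factorization p = 1 := by
    have habs : N.natAbs = p ^ (2 * k) * M.natAbs := by
      rw [hNM, Int.natAbs_mul, Int.natAbs_pow]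
      simp
    have h2 : (p ^ (2 * k) * M.natAbs).factorization p = 2 * k + 1 := by
      rw [← habs, hk]
    rw [Nat.factorization_mul (pow_ne_zero _ hp.pos.ne') hMa, Nat.Prime.factorization_pow hp,
      Finsupp.add_apply, Finsupp.single_apply, if_pos rfl] at h2
    omega
  have hpM : (p : ℤ) ∣ M := by
    rw [← Int.dvd_natAbs]
    exact_mod_cast (hp.dvd_iff_one_le_factorization hMa).mpr (by omega)
  have hp2M : ¬ ((p : ℤ)) ^ 2 ∣ M := by
    intro h
    rw [← Int.dvd_natAbs] at h
    have h' : p ^ 2 ∣ M.natAbs := by exact_mod_cast h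
    have := (Nat.Prime.pow_dvd_iff_le_factorization hp hMa).mp h'
    omega
  have hpK : ((p : K)) ≠ 0 := Nat.cast_ne_zero.mpr hp.pos.ne'
  set y : K := x / ((p : K)) ^ k with hydef
  have hy2 : y ^ 2 = (M : K) := by
    rw [hydef, div_pow, hx, hNM]
    push_cast
    field_simp
    ring
  have hyint : IsIntegral ℤ y := by
    refine IsIntegral.of_pow two_pos ?_
    rw [hy2]
    exact isIntegral_algebraMap (x := M)
  refine crit K p hp ⟨y, (mem_integralClosure_iff ℤ K).mpr hyint⟩ ⟨((M / p : ℤ) : 𝓞 K), ?_⟩ ?_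
  · refine RingOfIntegers.eq_iff.mp ?_
    rw [RingOfIntegers.coe_eq_algebraMap, RingOfIntegers.coe_eq_algebraMap]
    erw [map_pow]
    rw [map_mul, map_natCast, map_intCast, RingOfIntegers.map_mk, hy2]
    have hPM : ((p : ℤ) * (M / (p : ℤ)) : ℤ) = M := Int.mul_ediv_cancel' hpM
    conv_lhs => rw [← hPM]
    push_cast
    ring
  · rintro ⟨z, hz⟩
    have hzK : y = (p : K) * (z : K) := by
      have h3 := congrArg (algebraMap (𝓞 K) K) hz
      push_cast at h3
      exact h3
    have h1 : ((p : K)) ^ 2 * (z : K) ^ 2 = (M : K) := by rw [← mul_pow, ← hzK, hy2]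
    have hpQ : ((p : ℚ)) ≠ 0 := Nat.cast_ne_zero.mpr hp.pos.ne'
    have hz2 : ((z : K)) ^ 2 = algebraMap ℚ K ((M : ℚ) / (p : ℚ) ^ 2) := by
      rw [map_div₀, map_pow, map_intCast, map_natCast]
      rw [eq_div_iff (pow_ne_zero 2 hpK)]
      rw [← h1]
      push_cast
      ring
    have hint : IsIntegral ℤ (algebraMap ℚ K ((M : ℚ) / (p : ℚ) ^ 2)) := by
      rw [← hz2]
      have := RingOfIntegers.isIntegral_coe (z ^ 2 : 𝓞 K)
      push_cast at this
      exact this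
    have hint2 : IsIntegral ℤ ((M : ℚ) / (p : ℚ) ^ 2) := by
      rwa [isIntegral_algebraMap_iff (algebraMap ℚ K).injective] at hint
    obtain ⟨s, hs⟩ := IsIntegrallyClosed.isIntegral_iff.mp hint2
    apply hp2M
    refine ⟨s, ?_⟩
    rw [eq_div_iff (pow_ne_zero 2 hpQ)] at hs
    have : (s : ℚ) * (p : ℚ) ^ 2 = (M : ℚ) := hs
    exact_mod_cast (by linarith : (M : ℚ) = (p : ℚ) ^ 2 * (s : ℚ))

lemma zmod2_cases : ∀ z : ZMod 2, z = 0 ∨ z = 1 := by decide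

lemma zmod2_val01 : ((0 : ZMod 2)).val = 0 ∧ ((1 : ZMod 2)).val = 1 ∧ ((2 : ZMod 2)).val = 0 ∧
    ((1 : ZMod 2) + 1).val = 0 := by decide

lemma lem2 (n : ℕ) (a : Fin n → ℤ) (ha0 : ∀ i, a i ≠ 0)
    (K : Type*) [Field K] [NumberField K] (α : Fin n → K) (hα : ∀ i, (α i) ^ 2 = (a i : K))
    (hgen : ∀ x : K, x ∈ Algebra.adjoin ℚ (Set.range α))
    (hdeg : Module.finrank ℚ K = 2 ^ n)
    (u : Fin n → ZMod 2) (hu : u ≠ 0) :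
    ¬ IsSquare (∏ i, a i ^ (u i).val) := by
  classical
  rintro ⟨m, hm⟩
  set N : (Fin n → ZMod 2) → ℤ := fun v => ∏ i, a i ^ (v i).val with hNdef
  set β : (Fin n → ZMod 2) → K := fun v => ∏ i, α i ^ (v i).val with hβdef
  have hNu : N u = m * m := hm
  have hN0 : ∀ v, N v ≠ 0 := fun v => Finset.prod_ne_zero_iff.mpr fun i _ => pow_ne_zero _ (ha0 i)
  have hβsq : ∀ v, β v ^ 2 = (N v : K) := by
    intro v
    rw [hβdef, hNdef]
    push_cast
    rw [← Finset.prod_pow]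
    refine Finset.prod_congr rfl fun i _ => ?_
    rw [← pow_mul, mul_comm, pow_mul, hα i]
  have hβmul : ∀ v w, β v * β w =
      ((∏ i, a i ^ ((v i).val * (w i).val) : ℤ) : K) * β (v + w) := by
    intro v w
    rw [hβdef]
    push_cast
    simp only [← Finset.prod_mul_distrib]
    refine Finset.prod_congr rfl fun i _ => ?_
    have hp : (v + w) i = v i + w i := rfl
    rcases zmod2_cases (v i) with h1 | h1 <;> rcases zmod2_cases (w i) with h2 | h2 <;>
      rw [hp, h1, h2] <;>
      norm_num [zmod2_val01.1, zmod2_val01.2.1, zmod2_val01.2.2.1, zmod2_val01.2.2.2] <;>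
      rw [← hα i] <;> ring
  have hβsingle : ∀ i : Fin n, β (Pi.single i 1) = α i := by
    intro i
    rw [hβdef]
    refine (Finset.prod_eq_single i (fun k _ hk => ?_) (fun h => absurd (Finset.mem_univ i) h)).trans ?_
    · rw [Pi.single_eq_of_ne hk]
      exact pow_zero _
    · rw [Pi.single_eq_same, zmod2_val01.2.1, pow_one]
  obtain ⟨j, hj⟩ : ∃ j, u j ≠ 0 := Function.ne_iff.mp hu
  have hj1 : u j = 1 := (zmod2_cases (u j)).resolve_left hj
  have hm0 : m ≠ 0 := by
    intro h
    exact hN0 u (by rw [hNu, h, mul_zero])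
  -- β u = ± m
  have hβu : β u = (m : K) ∨ β u = -(m : K) := by
    have hsq : β u ^ 2 = ((m : K)) ^ 2 := by
      rw [hβsq u, hNu]
      push_cast
      ring
    have h0 : (β u - m) * (β u + m) = 0 := by
      have : β u ^ 2 - ((m : K)) ^ 2 = 0 := by rw [hsq]; ring
      calc (β u - m) * (β u + m) = β u ^ 2 - ((m : K)) ^ 2 := by ring
        _ = 0 := this
    rcases mul_eq_zero.mp h0 with h | h
    · exact Or.inl (sub_eq_zero.mp h)
    · exact Or.inr (eq_neg_of_add_eq_zero_left h)
  obtain ⟨ε, hε0, hβuε⟩ : ∃ ε : ℤ, ε ≠ 0 ∧ β u = (ε : K) := by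
    rcases hβu with h | h
    · exact ⟨m, hm0, h⟩
    · exact ⟨-m, neg_ne_zero.mpr hm0, by rw [h]; push_cast; ring⟩
  -- u' = u + e_j has u' j = 0 and β u' * α j = β u
  set e : Fin n → ZMod 2 := Pi.single j 1 with hedef
  set u' : Fin n → ZMod 2 := u + e with hu'def
  have hu'j : u' j = 0 := by
    rw [hu'def]
    show u j + e j = 0
    rw [hj1, hedef, Pi.single_eq_same]
    decide
  have hu'e : u' + e = u := by
    funext i
    show u i + e i + e i = u i
    rcases zmod2_cases (e i) with h | h <;> rw [h]
    · rw [add_zero, add_zero]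
    · rw [add_assoc, show (1 : ZMod 2) + 1 = 0 by decide, add_zero]
  have hcu : (∏ i, a i ^ ((u' i).val * ((e i)).val) : ℤ) = 1 := by
    refine Finset.prod_eq_one fun i _ => ?_
    by_cases hij : i = j
    · subst hij
      rw [hu'j]
      simp [zmod2_val01.1]
    · rw [hedef, Pi.single_eq_of_ne hij]
      simp [zmod2_val01.1]
  have hkeyj : β u' * α j = (ε : K) := by
    have := hβmul u' e
    rw [hcu, hu'e, hβsingle j] at this
    rw [this, hβuε]
    push_cast
    ring
  have hβu'ne : β u' ≠ 0 := by
    intro h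
    apply hε0
    have : (ε : K) = 0 := by rw [← hkeyj, h, zero_mul]
    exact_mod_cast this
  have hαj : α j = ((ε / N u' : ℚ)) • β u' := by
    have hNu'K : β u' * β u' = ((N u' : ℤ) : K) := by rw [← pow_two]; exact hβsq u'
    have hNu'0K : ((N u' : ℤ) : K) ≠ 0 := Int.cast_ne_zero.mpr (hN0 u')
    rw [Algebra.smul_def, eq_ratCast (algebraMap ℚ K)]
    push_cast
    rw [div_mul_eq_mul_div, eq_div_iff hNu'0K]
    calc α j * ((N u' : ℤ) : K) = α j * (β u' * β u') := by rw [hNu'K]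
      _ = (β u' * α j) * β u' := by ring
      _ = (ε : K) * β u' := by rw [hkeyj]
  -- spanning set: products avoiding j
  set s : Set K := β '' {w : Fin n → ZMod 2 | w j = 0} with hsdef
  set W : Submodule ℚ K := Submodule.span ℚ s with hWdef
  have hone : (1 : K) ∈ W := by
    apply Submodule.subset_span
    refine ⟨0, rfl, ?_⟩
    rw [hβdef]
    refine Finset.prod_eq_one fun i _ => ?_
    rw [show ((0 : Fin n → ZMod 2) i).val = 0 from rfl, pow_zero]
  have hmulmem : ∀ x y : K, x ∈ W → y ∈ W → x * y ∈ W := by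
    have hss : Submodule.span ℚ s * Submodule.span ℚ s ≤ W := by
      rw [Submodule.span_mul_span, hWdef]
      rw [Submodule.span_le]
      rintro z ⟨x, ⟨v, hv, rfl⟩, y, ⟨w, hw, rfl⟩, rfl⟩
      show β v * β w ∈ Submodule.span ℚ s
      have := hβmul v w
      have hmem : β (v + w) ∈ s := ⟨v + w, by
        show (v + w) j = 0
        rw [show (v + w) j = v j + w j from rfl, hv, hw, add_zero], rfl⟩
      rw [this, show ((∏ i, a i ^ ((v i).val * (w i).val) : ℤ) : K) * β (v + w)
          = ((∏ i, a i ^ ((v i).val * (w i).val) : ℤ) : ℚ) • β (v + w) by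
        rw [Algebra.smul_def, eq_ratCast (algebraMap ℚ K)]; push_cast; ring]
      exact Submodule.smul_mem _ _ (Submodule.subset_span hmem)
    intro x y hx hy
    exact hss (Submodule.mul_mem_mul hx hy)
  have hrange : ∀ i, α i ∈ W := by
    intro i
    by_cases hij : i = j
    · subst hij
      rw [hαj]
      refine Submodule.smul_mem _ _ (Submodule.subset_span ⟨u', hu'j, rfl⟩)
    · rw [← hβsingle i]
      refine Submodule.subset_span ⟨Pi.single i 1, ?_, rfl⟩
      show (Pi.single (M := fun _ => ZMod 2) i 1) j = 0
      exact Pi.single_eq_of_ne (fun h => hij h.symm) 1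
  have hW_top : ∀ x : K, x ∈ W := by
    intro x
    have hsub : Algebra.adjoin ℚ (Set.range α) ≤ W.toSubalgebra hone hmulmem := by
      rw [Algebra.adjoin_le_iff]
      rintro y ⟨i, rfl⟩
      exact hrange i
    exact hsub (hgen x)
  -- finrank contradiction
  have hspan_top : Submodule.span ℚ s = ⊤ := by
    rw [eq_top_iff]
    exact fun x _ => hW_top x
  set F : Finset (Fin n → ZMod 2) := Finset.univ.filter (fun w => w j = 0) with hFdef
  have hsF : s = ↑(F.image β) := by
    rw [hsdef, Finset.coe_image, hFdef]
    congr 1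
    ext w
    simp
  have hle : Module.finrank ℚ K ≤ F.card := by
    have h1 : Module.finrank ℚ K = Module.finrank ℚ (⊤ : Submodule ℚ K) := by
      rw [finrank_top]
    rw [h1, ← hspan_top, hsF]
    exact le_trans (finrank_span_finset_le_card (F.image β)) (Finset.card_image_le)
  have hlt : F.card < 2 ^ n := by
    have hne : Pi.single j (1 : ZMod 2) ∉ F := by
      rw [hFdef]
      simp only [Finset.mem_filter, Finset.mem_univ, true_and]
      rw [Pi.single_eq_same]
      decide
    have hssub : F ⊂ Finset.univ := (Finset.ssubset_univ_iff).mpr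
      (fun h => hne (h ▸ Finset.mem_univ _))
    calc F.card < Fintype.card (Fin n → ZMod 2) := Finset.card_lt_card hssub
      _ = 2 ^ n := by rw [Fintype.card_fun, ZMod.card, Fintype.card_fin]
  rw [hdeg] at hle
  omega

/-- If `K = ℚ(√a₁, ..., √aₙ)` is an imaginary `n`-quadratic field of degree `2ⁿ` over `ℚ`
(generated by square roots of integers, at least one negative), then at least `n - 1`
distinct rational primes ramify in `K` (i.e. divide its discriminant). -/
theorem stmt_9 (n : ℕ) (a : Fin n → ℤ) (hsf : ∀ i, Squarefree (a i))
    (K : Type*) [Field K] [NumberField K] (α : Fin n → K) (hα : ∀ i, (α i) ^ 2 = (a i : K))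
    (hgen : ∀ x : K, x ∈ Algebra.adjoin ℚ (Set.range α))
    (hdeg : Module.finrank ℚ K = 2 ^ n) (him : ∃ i, a i < 0) :
    n - 1 ≤ {p : ℕ | p.Prime ∧ (p : ℤ) ∣ NumberField.discr K}.ncard := by
  classical
  have ha0 : ∀ i, a i ≠ 0 := fun i => (hsf i).ne_zero
  set N : (Fin n → ZMod 2) → ℤ := fun v => ∏ i, a i ^ (v i).val with hNdef
  set β : (Fin n → ZMod 2) → K := fun v => ∏ i, α i ^ (v i).val with hβdef
  have hN0 : ∀ v, N v ≠ 0 := fun v => Finset.prod_ne_zero_iff.mpr fun i _ => pow_ne_zero _ (ha0 i)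
  have hβsq : ∀ v, β v ^ 2 = (N v : K) := by
    intro v
    rw [hβdef, hNdef]
    push_cast
    rw [← Finset.prod_pow]
    refine Finset.prod_congr rfl fun i _ => ?_
    rw [← pow_mul, mul_comm, pow_mul, hα i]
  set Q : Set ℕ := {p : ℕ | p.Prime ∧ (p : ℤ) ∣ NumberField.discr K} with hQdef
  have hQfin : Q.Finite := by
    refine Set.Finite.subset (Finset.finite_toSet ((NumberField.discr K).natAbs.divisors)) ?_
    rintro p ⟨hp, hpd⟩
    rw [Finset.mem_coe, Nat.mem_divisors]
    exact ⟨Int.natCast_dvd_natCast.mp (Int.dvd_natAbs.mpr hpd),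
      Int.natAbs_ne_zero.mpr (NumberField.discr_ne_zero K)⟩
  haveI : Fintype Q := hQfin.fintype
  -- key : odd multiplicity primes are in Q
  have hkey : ∀ (v : Fin n → ZMod 2) (p : ℕ), p.Prime → p ∉ Q →
      Even ((N v).natAbs.factorization p) := by
    intro v p hp hpQ
    rw [← Nat.not_odd_iff_even]
    intro hodd
    exact hpQ ⟨hp, lemA K p hp (N v) (hN0 v) (β v) (hβsq v) hodd⟩
  -- the injective map
  set f : (Fin n → ZMod 2) → (ZMod 2) × (Q → ZMod 2) :=
    fun v => (if N v < 0 then 1 else 0,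
      fun p => (((N v).natAbs.factorization (p : ℕ) : ℕ) : ZMod 2)) with hfdef
  have hinj : Function.Injective f := by
    intro v w hvw
    by_contra hne
    have hu0 : v + w ≠ 0 := by
      intro h
      apply hne
      funext i
      have h2 := congrFun h i
      rw [show (v + w) i = v i + w i from rfl,
        show (0 : Fin n → ZMod 2) i = (0 : ZMod 2) from rfl] at h2
      rcases zmod2_cases (v i) with h3 | h3 <;> rcases zmod2_cases (w i) with h4 | h4 <;>
        rw [h3, h4] <;> rw [h3, h4] at h2 <;> first | rfl | (exfalso; revert h2; decide)
    set u : Fin n → ZMod 2 := v + w with hudef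
    -- key product identity
    have hval : ∀ z1 z2 : ZMod 2, z1.val + z2.val = (z1 + z2).val + 2 * (z1.val * z2.val) := by
      decide
    set c : ℤ := ∏ i, a i ^ ((v i).val * (w i).val) with hcdef
    have hc0 : c ≠ 0 := Finset.prod_ne_zero_iff.mpr fun i _ => pow_ne_zero _ (ha0 i)
    have hcid : N v * N w = N u * c ^ 2 := by
      rw [hNdef, hcdef, ← Finset.prod_mul_distrib, ← Finset.prod_pow, ← Finset.prod_mul_distrib]
      refine Finset.prod_congr rfl fun i _ => ?_
      rw [← pow_add, ← pow_mul, ← pow_add, hval (v i) (w i)]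
      rw [show (u i).val = (v i + w i).val from rfl]
      congr 1
      omega
    -- sign
    have hsigns : N v < 0 ↔ N w < 0 := by
      have h1 := congrArg Prod.fst hvw
      simp only [hfdef] at h1
      by_cases h2 : N v < 0 <;> by_cases h3 : N w < 0 <;>
        simp [h2, h3] at h1 ⊢
    have hupos : 0 < N u := by
      have hvw_pos : 0 < N v * N w := by
        rcases lt_trichotomy (N v) 0 with h2 | h2 | h2
        · exact mul_pos_of_neg_of_neg h2 (hsigns.mp h2)
        · exact absurd h2 (hN0 v)
        · refine mul_pos h2 ?_
          rcases lt_trichotomy (N w) 0 with h3 | h3 | h3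
          · exact absurd (hsigns.mpr h3) (not_lt.mpr h2.le)
          · exact absurd h3 (hN0 w)
          · exact h3
      rw [hcid] at hvw_pos
      have hc2 : 0 < c ^ 2 := by positivity
      nlinarith
    -- parity
    have hfact : ∀ p : ℕ, p.Prime →
        (N v).natAbs.factorization p + (N w).natAbs.factorization p
          = (N u).natAbs.factorization p + 2 * c.natAbs.factorization p := by
      intro p hp
      have habs : (N v).natAbs * (N w).natAbs = (N u).natAbs * c.natAbs ^ 2 := by
        rw [← Int.natAbs_mul, ← Int.natAbs_pow, ← Int.natAbs_mul, hcid]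
      have h2 := congrArg (fun t => t.factorization p) habs
      simp only [Nat.factorization_mul (Int.natAbs_ne_zero.mpr (hN0 v))
          (Int.natAbs_ne_zero.mpr (hN0 w)),
        Nat.factorization_mul (Int.natAbs_ne_zero.mpr (hN0 u))
          (pow_ne_zero 2 (Int.natAbs_ne_zero.mpr hc0)),
        Nat.factorization_pow, Finsupp.add_apply, Finsupp.smul_apply, smul_eq_mul] at h2
      omega
    have heven : ∀ p : ℕ, Even ((N u).natAbs.factorization p) := by
      intro p
      by_cases hp : p.Prime
      · by_cases hpQ : p ∈ Q
        · have h1 := congrFun (congrArg Prod.snd hvw) ⟨p, hpQ⟩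
          simp only [hfdef] at h1
          have h2 : ((N v).natAbs.factorization p) % 2 = ((N w).natAbs.factorization p) % 2 := by
            have := (ZMod.natCast_eq_natCast_iff _ _ _).mp h1
            exact this
          have h3 := hfact p hp
          rw [Nat.even_iff]
          omega
        · have h2 := hkey v p hp hpQ
          have h3 := hkey w p hp hpQ
          have h4 := hfact p hp
          rw [Nat.even_iff]
          rw [Nat.even_iff] at h2 h3
          omega
      · rw [Nat.factorization_eq_zero_of_not_prime _ hp]
        exact Even.zero
    -- N u is a square
    have hsq : IsSquare (N u) := by
      have h1 : IsSquare ((N u).natAbs) :=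
        even_fact_isSquare _ (Int.natAbs_ne_zero.mpr (hN0 u)) heven
      have h2 : ((N u).natAbs : ℤ) = N u := Int.natAbs_of_nonneg hupos.le
      rw [← h2]
      exact (Int.isSquare_natCast_iff).mpr h1
    exact lem2 n a ha0 K α hα hgen hdeg u hu0 hsq
  -- cardinalities
  have hcard := Fintype.card_le_of_injective f hinj
  rw [Fintype.card_prod, Fintype.card_fun, Fintype.card_fun, ZMod.card, Fintype.card_fin] at hcard
  have hQcard : Fintype.card Q = Q.ncard := by
    rw [Set.ncard_eq_toFinset_card' Q]
    exact (Set.toFinset_card Q).symm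
  rw [hQcard] at hcard
  -- 2 ^ n ≤ 2 * 2 ^ ncard → n ≤ ncard + 1
  have h2n : 2 ^ n ≤ 2 ^ (Q.ncard + 1) := by
    calc (2 : ℕ) ^ n ≤ 2 * 2 ^ Q.ncard := hcard
      _ = 2 ^ (Q.ncard + 1) := by ring
  have := (Nat.pow_le_pow_iff_right (by norm_num)).mp h2n
  omega
end

section
/- For the imaginary biquadratic field K = Q(√-3, √2), the unit group E(K) equals the product E(Q(√2))·E(Q(√-3))·E(Q(√-6)) of the unit groups of its three quadratic subfields; equivalently, the unit index q(K/Q) = [E(K) : E(Q(√2))E(Q(√-3))E(Q(√-6))] equals 1. -/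
open NumberField

section Infra

variable {K : Type*} [Field K] [CharZero K]

lemma noRatSq (n : ℕ) (hn : ¬ IsSquare n) (q : ℚ) : q ^ 2 ≠ (n : ℚ) := by
  intro h
  exact hn (Rat.isSquare_natCast_iff.mp ⟨q, by rw [← h]; ring⟩)

lemma pair_indep {s : K} (hs : s ^ 2 = 2) (c d : ℚ) (h : (c : K) + d * s = 0) :
    c = 0 ∧ d = 0 := by
  have hq : (c : ℚ) ^ 2 = 2 * d ^ 2 := by
    have : ((c : K)) ^ 2 = 2 * (d : K) ^ 2 := by
      have h1 : (c : K) = -((d : K) * s) := by linear_combination h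
      calc ((c : K)) ^ 2 = (d : K) ^ 2 * s ^ 2 := by rw [h1]; ring
        _ = 2 * (d : K) ^ 2 := by rw [hs]; ring
    exact_mod_cast this
  by_cases hd : d = 0
  · subst hd
    constructor
    · nlinarith
    · rfl
  · exfalso
    refine noRatSq 2 (Nat.prime_two.prime.not_isSquare) (c / d) ?_
    push_cast
    field_simp
    linarith
  
lemma coords_unique {r s : K} (hr : r ^ 2 = -3) (hs : s ^ 2 = 2)
    (a b c d : ℚ) (h : (a : K) + b * r + c * s + d * (r * s) = 0) :
    a = 0 ∧ b = 0 ∧ c = 0 ∧ d = 0 := by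
  have h1 : (a : K) + c * s = -(((b : K) + d * s) * r) := by linear_combination h
  have h2 : ((a : K) + c * s) ^ 2 = (((b : K) + d * s) * r) ^ 2 := by rw [h1]; ring
  have key : ((a^2 + 2*c^2 + 3*b^2 + 6*d^2 : ℚ) : K) + ((2*a*c + 6*b*d : ℚ)) * s = 0 := by
    push_cast
    linear_combination h2 + ((b:K) + (d:K)*s)^2 * hr - ((c:K)^2 + 3*(d:K)^2)*hs
  obtain ⟨h3, _⟩ := pair_indep hs _ _ key
  refine ⟨?_, ?_, ?_, ?_⟩ <;> nlinarith [sq_nonneg a, sq_nonneg b, sq_nonneg c, sq_nonneg d]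

end Infra
open NumberField
section Infra2
variable {K : Type*} [Field K] [CharZero K]

lemma mul_formula {u v : K} (hu : u ^ 2 = -3) (hv : v ^ 2 = 2)
    (a b c d a' b' c' d' : ℚ) :
    ((a : K) + b * u + c * v + d * (u * v)) * ((a' : K) + b' * u + c' * v + d' * (u * v)) =
      ((a*a' - 3*b*b' + 2*c*c' - 6*d*d' : ℚ) : K)
        + ((a*b' + a'*b + 2*(c*d' + c'*d) : ℚ)) * u
        + ((a*c' + a'*c - 3*(b*d' + b'*d) : ℚ)) * v
        + ((a*d' + a'*d + b*c' + b'*c : ℚ)) * (u * v) := by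
  push_cast
  linear_combination ((b:K)*b' + ((b:K)*d' + (d:K)*b')*v + (d:K)*d'*v^2) * hu
    + ((c:K)*c' + ((c:K)*d' + (d:K)*c')*u - 3*(d:K)*d') * hv

lemma coords_exist {r s : K} (hr : r ^ 2 = -3) (hs : s ^ 2 = 2)
    (hgen : ∀ x : K, x ∈ Algebra.adjoin ℚ ({r, s} : Set K)) (x : K) :
    ∃ a b c d : ℚ, x = (a : K) + b * r + c * s + d * (r * s) := by
  let S : Subalgebra ℚ K :=
    { carrier := {x : K | ∃ a b c d : ℚ, x = (a : K) + b * r + c * s + d * (r * s)}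
      mul_mem' := by
        rintro x y ⟨a, b, c, d, rfl⟩ ⟨a', b', c', d', rfl⟩
        exact ⟨_, _, _, _, mul_formula hr hs a b c d a' b' c' d'⟩
      one_mem' := ⟨1, 0, 0, 0, by push_cast; ring⟩
      add_mem' := by
        rintro x y ⟨a, b, c, d, rfl⟩ ⟨a', b', c', d', rfl⟩
        exact ⟨a + a', b + b', c + c', d + d', by push_cast; ring⟩
      zero_mem' := ⟨0, 0, 0, 0, by push_cast; ring⟩
      algebraMap_mem' := fun q => ⟨q, 0, 0, 0, by rw [eq_ratCast (algebraMap ℚ K) q]; push_cast; ring⟩ }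
  have hle : Algebra.adjoin ℚ ({r, s} : Set K) ≤ S := by
    apply Algebra.adjoin_le
    rintro y (rfl | rfl)
    · exact ⟨0, 1, 0, 0, by push_cast; ring⟩
    · exact ⟨0, 0, 1, 0, by push_cast; ring⟩
  exact hle (hgen x)

end Infra2
open NumberField
section Infra3
variable {K : Type*} [Field K] [CharZero K]

lemma hom_ext {L : Type*} [Field L] {r s : K} (hr : r ^ 2 = -3) (hs : s ^ 2 = 2)
    (hgen : ∀ x : K, x ∈ Algebra.adjoin ℚ ({r, s} : Set K))
    (f g : K →+* L) (h1 : f r = g r) (h2 : f s = g s) : ∀ x, f x = g x := by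
  intro x
  obtain ⟨a, b, c, d, rfl⟩ := coords_exist hr hs hgen x
  simp only [map_add, map_mul, map_ratCast, h1, h2]

lemma exists_conj {r s : K} (hr : r ^ 2 = -3) (hs : s ^ 2 = 2)
    (hgen : ∀ x : K, x ∈ Algebra.adjoin ℚ ({r, s} : Set K))
    (u v : K) (hu : u = r ∨ u = -r) (hv : v = s ∨ v = -s) :
    ∃ σ : K ≃ₐ[ℚ] K, σ r = u ∧ σ s = v := by
  have hu2 : u ^ 2 = -3 := by rcases hu with rfl | rfl <;> [exact hr; (rw [neg_pow]; simp [hr])]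
  have hv2 : v ^ 2 = 2 := by rcases hv with rfl | rfl <;> [exact hs; (rw [neg_pow]; simp [hs])]
  choose ca cb cc cd hco using coords_exist hr hs hgen
  set f : K → K := fun x => (ca x : K) + cb x * u + cc x * v + cd x * (u * v) with hf
  have hrep : ∀ (x : K) (a b c d : ℚ), x = (a : K) + b * r + c * s + d * (r * s) →
      f x = (a : K) + b * u + c * v + d * (u * v) := by
    intro x a b c d hx
    have h0 : ((ca x - a : ℚ) : K) + ((cb x - b : ℚ) : K) * r + ((cc x - c : ℚ) : K) * s
        + ((cd x - d : ℚ) : K) * (r * s) = 0 := by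
      push_cast
      linear_combination (hco x).symm.trans hx
    obtain ⟨e1, e2, e3, e4⟩ := coords_unique hr hs _ _ _ _ h0
    simp only [hf]
    rw [show ca x = a by linarith [sub_eq_zero.mp (by linarith [e1] : ca x - a = 0)],
      show cb x = b by linarith [sub_eq_zero.mp (by linarith [e2] : cb x - b = 0)],
      show cc x = c by linarith [sub_eq_zero.mp (by linarith [e3] : cc x - c = 0)],
      show cd x = d by linarith [sub_eq_zero.mp (by linarith [e4] : cd x - d = 0)]]
  have hmul : ∀ x y : K, f (x * y) = f x * f y := by
    intro x y
    rw [hrep x _ _ _ _ (hco x), hrep y _ _ _ _ (hco y),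
      hrep (x * y) (ca x*ca y - 3*cb x*cb y + 2*cc x*cc y - 6*cd x*cd y)
        (ca x*cb y + ca y*cb x + 2*(cc x*cd y + cc y*cd x))
        (ca x*cc y + ca y*cc x - 3*(cb x*cd y + cb y*cd x))
        (ca x*cd y + ca y*cd x + cb x*cc y + cb y*cc x)
        (by conv_lhs => rw [hco x, hco y]
            exact mul_formula hr hs _ _ _ _ _ _ _ _),
      mul_formula hu2 hv2]
  have hadd : ∀ x y : K, f (x + y) = f x + f y := by
    intro x y
    rw [hrep x _ _ _ _ (hco x), hrep y _ _ _ _ (hco y),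
      hrep (x + y) (ca x + ca y) (cb x + cb y) (cc x + cc y) (cd x + cd y)
        (by conv_lhs => rw [hco x, hco y]
            push_cast; ring)]
    push_cast
    ring
  have hone : f 1 = 1 := by
    rw [hrep _ 1 0 0 0 (by push_cast; ring)]
    push_cast; ring
  have hcommutes : ∀ q : ℚ, f (algebraMap ℚ K q) = algebraMap ℚ K q := by
    intro q
    rw [eq_ratCast (algebraMap ℚ K) q]
    rw [hrep _ q 0 0 0 (by push_cast; ring)]
    push_cast; ring
  have hzero : f 0 = 0 := by
    rw [hrep _ 0 0 0 0 (by push_cast; ring)]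
    push_cast; ring
  set F : K →ₐ[ℚ] K :=
    { toFun := f, map_one' := hone, map_mul' := hmul, map_zero' := hzero,
      map_add' := hadd, commutes' := hcommutes } with hF
  have hfr : f r = u := by
    rw [hrep r 0 1 0 0 (by push_cast; ring)]; push_cast; ring
  have hfs : f s = v := by
    rw [hrep s 0 0 1 0 (by push_cast; ring)]; push_cast; ring
  have hfx : ∀ x, f x = (ca x : K) + cb x * u + cc x * v + cd x * (u * v) := fun _ => rfl
  have hinv : ∀ x, f (f x) = x := by
    intro x
    rcases hu with rfl | rfl <;> rcases hv with rfl | rfl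
    · rw [hrep (f x) (ca x) (cb x) (cc x) (cd x) (hfx x)]
      exact (hco x).symm
    · rw [hrep (f x) (ca x) (cb x) (-(cc x)) (-(cd x)) (by rw [hfx x]; push_cast; ring)]
      conv_rhs => rw [hco x]
      push_cast; ring
    · rw [hrep (f x) (ca x) (-(cb x)) (cc x) (-(cd x)) (by rw [hfx x]; push_cast; ring)]
      conv_rhs => rw [hco x]
      push_cast; ring
    · rw [hrep (f x) (ca x) (-(cb x)) (-(cc x)) (cd x) (by rw [hfx x]; push_cast; ring)]
      conv_rhs => rw [hco x]
      push_cast; ring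
  exact ⟨AlgEquiv.ofAlgHom F F (AlgHom.ext fun x => hinv x) (AlgHom.ext fun x => hinv x),
    hfr, hfs⟩

end Infra3
open NumberField
section Infra4
variable {K : Type*} [Field K] [CharZero K]

lemma notsq6 : ¬ IsSquare (6 : ℕ) := by
  rintro ⟨k, hk⟩
  have h1 : k ≤ 2 := by nlinarith
  interval_cases k <;> omega

lemma no_sqrt_neg_one {r s : K} (hr : r ^ 2 = -3) (hs : s ^ 2 = 2)
    (hgen : ∀ x : K, x ∈ Algebra.adjoin ℚ ({r, s} : Set K)) (x : K) : x ^ 2 ≠ -1 := by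
  intro hx
  obtain ⟨a, b, c, d, rfl⟩ := coords_exist hr hs hgen x
  have h2 : ((a : K) + b * r + c * s + d * (r * s)) * ((a : K) + b * r + c * s + d * (r * s))
      = -1 := by rw [← hx]; ring
  rw [mul_formula hr hs a b c d a b c d] at h2
  have h0 : ((a*a - 3*b*b + 2*c*c - 6*d*d + 1 : ℚ) : K) + ((a*b + a*b + 2*(c*d + c*d) : ℚ) : K) * r
      + ((a*c + a*c - 3*(b*d + b*d) : ℚ) : K) * s + ((a*d + a*d + b*c + b*c : ℚ) : K) * (r * s)
      = 0 := by push_cast; push_cast at h2; linear_combination h2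
  obtain ⟨e1, e2, e3, e4⟩ := coords_unique hr hs _ _ _ _ h0
  -- e1 : a² - 3b² + 2c² - 6d² + 1 = 0, e2 : 2ab + 4cd = 0, e3 : 2ac - 6bd = 0, e4 : 2ad + 2bc = 0
  have hcd : c * d * (a^2 + 3*b^2) = 0 := by linear_combination (a*d/2)*e3 + (3*b*d/2)*e4
  rcases mul_eq_zero.mp hcd with hcd0 | hab0
  · rcases mul_eq_zero.mp hcd0 with hc | hd
    · -- c = 0
      subst hc
      -- e2: 2ab = 0, e3: -6bd = 0, e4: 2ad = 0, e1: a²-3b²-6d²+1 = 0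
      rcases mul_eq_zero.mp (show a * b = 0 by linarith) with ha | hb
      · rcases mul_eq_zero.mp (show b * d = 0 by nlinarith [e3]) with hb | hd
        · subst ha; subst hb
          -- -6d² + 1 = 0
          have hd0 : d ≠ 0 := by intro h; rw [h] at e1; norm_num at e1
          exact noRatSq 6 notsq6 (1/d)
            (by field_simp; push_cast; nlinarith [e1])
        · subst ha; subst hd
          have hb0 : b ≠ 0 := by intro h; rw [h] at e1; norm_num at e1
          exact noRatSq 3 Nat.prime_three.prime.not_isSquare (1/b) (by field_simp; push_cast; nlinarith [e1])
      · subst hb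
        rcases mul_eq_zero.mp (show a * d = 0 by linarith) with ha | hd
        · subst ha
          have hd0 : d ≠ 0 := by intro h; rw [h] at e1; norm_num at e1
          exact noRatSq 6 notsq6 (1/d)
            (by field_simp; push_cast; nlinarith [e1])
        · subst hd
          nlinarith [e1, sq_nonneg a]
    · -- d = 0
      subst hd
      rcases mul_eq_zero.mp (show a * b = 0 by linarith) with ha | hb
      · subst ha
        rcases mul_eq_zero.mp (show b * c = 0 by linarith) with hb | hc
        · subst hb; nlinarith [e1, sq_nonneg c]
        · subst hc
          have hb0 : b ≠ 0 := by intro h; rw [h] at e1; norm_num at e1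
          exact noRatSq 3 Nat.prime_three.prime.not_isSquare (1/b) (by field_simp; push_cast; nlinarith [e1])
      · subst hb
        rcases mul_eq_zero.mp (show a * c = 0 by linarith) with ha | hc
        · subst ha; nlinarith [e1, sq_nonneg c]
        · subst hc; nlinarith [e1, sq_nonneg a]
  · -- a² + 3b² = 0 → a = b = 0 → e2 : 4cd = 0
    have ha : a = 0 := by nlinarith
    have hb : b = 0 := by nlinarith
    subst ha; subst hb
    rcases mul_eq_zero.mp (show c * d = 0 by linarith) with hc | hd
    · subst hc
      have hd0 : d ≠ 0 := by intro h; rw [h] at e1; norm_num at e1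
      exact noRatSq 6 notsq6 (1/d)
        (by field_simp; push_cast; nlinarith [e1])
    · subst hd; nlinarith [e1, sq_nonneg c]

lemma fixed_s {r s : K} (hr : r ^ 2 = -3) (hs : s ^ 2 = 2)
    (hgen : ∀ x : K, x ∈ Algebra.adjoin ℚ ({r, s} : Set K))
    (σ : K ≃ₐ[ℚ] K) (hσr : σ r = -r) (hσs : σ s = s) (x : K) (hx : σ x = x) :
    x ∈ Algebra.adjoin ℚ ({s} : Set K) := by
  obtain ⟨a, b, c, d, rfl⟩ := coords_exist hr hs hgen x
  have hσx : σ ((a:K) + b * r + c * s + d * (r * s))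
      = (a:K) + b * (-r) + c * s + d * (-r * s) := by
    simp [map_add, map_mul, hσr, hσs]
  rw [hσx] at hx
  have h0 : ((0 : ℚ) : K) + ((2*b : ℚ) : K) * r + ((0:ℚ):K) * s + ((2*d : ℚ):K) * (r * s) = 0 := by
    push_cast; linear_combination -hx
  obtain ⟨-, e2, -, e4⟩ := coords_unique hr hs _ _ _ _ h0
  have hb : b = 0 := by linarith
  have hd : d = 0 := by linarith
  subst hb; subst hd
  push_cast
  rw [show (a:K) + 0*r + c*s + 0*(r*s) = algebraMap ℚ K a + c • s by
    rw [eq_ratCast (algebraMap ℚ K) a, Rat.smul_def]; push_cast; ring]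
  exact add_mem (Subalgebra.algebraMap_mem _ a)
    (Subalgebra.smul_mem _ (Algebra.self_mem_adjoin_singleton ℚ s) c)

lemma fixed_r {r s : K} (hr : r ^ 2 = -3) (hs : s ^ 2 = 2)
    (hgen : ∀ x : K, x ∈ Algebra.adjoin ℚ ({r, s} : Set K))
    (τ : K ≃ₐ[ℚ] K) (hτr : τ r = r) (hτs : τ s = -s) (x : K) (hx : τ x = x) :
    x ∈ Algebra.adjoin ℚ ({r} : Set K) := by
  obtain ⟨a, b, c, d, rfl⟩ := coords_exist hr hs hgen x
  have hσx : τ ((a:K) + b * r + c * s + d * (r * s))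
      = (a:K) + b * r + c * (-s) + d * (r * -s) := by
    simp [map_add, map_mul, hτr, hτs]
  rw [hσx] at hx
  have h0 : ((0 : ℚ) : K) + ((0 : ℚ) : K) * r + ((2*c:ℚ):K) * s + ((2*d : ℚ):K) * (r * s) = 0 := by
    push_cast; linear_combination -hx
  obtain ⟨-, -, e3, e4⟩ := coords_unique hr hs _ _ _ _ h0
  have hc : c = 0 := by linarith
  have hd : d = 0 := by linarith
  subst hc; subst hd
  push_cast
  rw [show (a:K) + b*r + 0*s + 0*(r*s) = algebraMap ℚ K a + b • r by
    rw [eq_ratCast (algebraMap ℚ K) a, Rat.smul_def]; push_cast; ring]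
  exact add_mem (Subalgebra.algebraMap_mem _ a)
    (Subalgebra.smul_mem _ (Algebra.self_mem_adjoin_singleton ℚ r) b)

lemma fixed_rs {r s : K} (hr : r ^ 2 = -3) (hs : s ^ 2 = 2)
    (hgen : ∀ x : K, x ∈ Algebra.adjoin ℚ ({r, s} : Set K))
    (ρ : K ≃ₐ[ℚ] K) (hρr : ρ r = -r) (hρs : ρ s = -s) (x : K) (hx : ρ x = x) :
    x ∈ Algebra.adjoin ℚ ({r * s} : Set K) := by
  obtain ⟨a, b, c, d, rfl⟩ := coords_exist hr hs hgen x
  have hσx : ρ ((a:K) + b * r + c * s + d * (r * s))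
      = (a:K) + b * (-r) + c * (-s) + d * (-r * -s) := by
    simp [map_add, map_mul, hρr, hρs]
  rw [hσx] at hx
  have h0 : ((0 : ℚ) : K) + ((2*b : ℚ) : K) * r + ((2*c:ℚ):K) * s + ((0 : ℚ):K) * (r * s) = 0 := by
    push_cast; linear_combination -hx
  obtain ⟨-, e2, e3, -⟩ := coords_unique hr hs _ _ _ _ h0
  have hb : b = 0 := by linarith
  have hc : c = 0 := by linarith
  subst hb; subst hc
  push_cast
  rw [show (a:K) + 0*r + 0*s + d*(r*s) = algebraMap ℚ K a + d • (r*s) by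
    rw [eq_ratCast (algebraMap ℚ K) a, Rat.smul_def]; push_cast; ring]
  exact add_mem (Subalgebra.algebraMap_mem _ a)
    (Subalgebra.smul_mem _ (Algebra.self_mem_adjoin_singleton ℚ (r*s)) d)

lemma fixed_rat {r s : K} (hr : r ^ 2 = -3) (hs : s ^ 2 = 2)
    (hgen : ∀ x : K, x ∈ Algebra.adjoin ℚ ({r, s} : Set K))
    (σ τ : K ≃ₐ[ℚ] K) (hσr : σ r = -r) (hσs : σ s = s) (hτr : τ r = r) (hτs : τ s = -s)
    (x : K) (hx1 : σ x = x) (hx2 : τ x = x) : ∃ q : ℚ, x = (q : K) := by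
  obtain ⟨a, b, c, d, rfl⟩ := coords_exist hr hs hgen x
  have hσx : σ ((a:K) + b * r + c * s + d * (r * s))
      = (a:K) + b * (-r) + c * s + d * (-r * s) := by
    simp [map_add, map_mul, hσr, hσs]
  have hτx : τ ((a:K) + b * r + c * s + d * (r * s))
      = (a:K) + b * r + c * (-s) + d * (r * -s) := by
    simp [map_add, map_mul, hτr, hτs]
  rw [hσx] at hx1
  rw [hτx] at hx2
  have h0 : ((0 : ℚ) : K) + ((2*b : ℚ) : K) * r + ((0:ℚ):K) * s + ((2*d : ℚ):K) * (r * s) = 0 := by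
    push_cast; linear_combination -hx1
  have h0' : ((0 : ℚ) : K) + ((0 : ℚ) : K) * r + ((2*c : ℚ):K) * s + ((2*d:ℚ):K) * (r * s) = 0 := by
    push_cast; linear_combination -hx2
  obtain ⟨-, e2, -, e4⟩ := coords_unique hr hs _ _ _ _ h0
  obtain ⟨-, -, e3, -⟩ := coords_unique hr hs _ _ _ _ h0'
  refine ⟨a, ?_⟩
  rw [show b = 0 by linarith, show c = 0 by linarith, show d = 0 by linarith]
  push_cast; ring

lemma rat_integral {q : ℚ} (h : IsIntegral ℤ ((q : K))) : ∃ n : ℤ, (n : ℚ) = q := by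
  have h2 : IsIntegral ℤ q := IsIntegral.tower_bot (B := K) (algebraMap ℚ K).injective
    (by rwa [eq_ratCast (algebraMap ℚ K) q])
  exact IsIntegrallyClosed.isIntegral_iff.mp h2

lemma conj_phi {r s : K} (hr : r ^ 2 = -3) (hs : s ^ 2 = 2)
    (hgen : ∀ x : K, x ∈ Algebra.adjoin ℚ ({r, s} : Set K))
    (σ : K ≃ₐ[ℚ] K) (hσr : σ r = -r) (hσs : σ s = s) (φ : K →+* ℂ) (x : K) :
    φ (σ x) = starRingEnd ℂ (φ x) := by
  have him : starRingEnd ℂ (φ r) = - φ r := by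
    have h2 : (φ r) ^ 2 = -3 := by
      rw [← map_pow, hr, map_neg]
      norm_num [map_ofNat]
    have hre : (φ r).re ^ 2 - (φ r).im ^ 2 = -3 := by
      have := congrArg Complex.re h2
      simpa [Complex.sq_norm, pow_two, Complex.mul_re] using this
    have him0 : (φ r).re * (φ r).im = 0 := by
      have := congrArg Complex.im h2
      simp [pow_two, Complex.mul_im] at this
      linarith
    have hre0 : (φ r).re = 0 := by
      rcases mul_eq_zero.mp him0 with h | h
      · exact h
      · exfalso; rw [h] at hre; nlinarith
    apply Complex.ext <;> simp [hre0]
  have hrel : starRingEnd ℂ (φ s) = φ s := by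
    have h2 : (φ s) ^ 2 = 2 := by rw [← map_pow, hs]; norm_num [map_ofNat]
    have hre : (φ s).re ^ 2 - (φ s).im ^ 2 = 2 := by
      have := congrArg Complex.re h2
      simpa [pow_two, Complex.mul_re] using this
    have him0 : (φ s).re * (φ s).im = 0 := by
      have := congrArg Complex.im h2
      simp [pow_two, Complex.mul_im] at this
      linarith
    have him' : (φ s).im = 0 := by
      rcases mul_eq_zero.mp him0 with h | h
      · exfalso; rw [h] at hre; nlinarith
      · exact h
    apply Complex.ext <;> simp [him']
  exact hom_ext hr hs hgen (φ.comp (σ : K →+* K)) ((starRingEnd ℂ).comp φ)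
    (by simp [hσr, him]) (by simp [hσs, hrel]) x

end Infra4
open NumberField

lemma sq_of_nonneg_or (X : ℤ) (hX : 0 ≤ X) (a : ℤ) (h : X = a ^ 2 ∨ X = -a ^ 2) :
    ∃ b : ℤ, X = b ^ 2 := by
  rcases h with h | h
  · exact ⟨a, h⟩
  · exact ⟨0, by nlinarith [sq_nonneg a]⟩

lemma pell_sq_pos (p q : ℤ) (hp : 0 < p) (h : p ^ 2 - 2 * q ^ 2 = 1) :
    ∃ c d : ℤ, c ^ 2 + 2 * d ^ 2 = p ∧ 2 * c * d = q := by
  have hodd : Odd p := by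
    rcases Int.even_or_odd p with ⟨t, ht⟩ | ho
    · exfalso
      have : Even ((2 : ℤ) * q ^ 2 + 1) := by
        rw [show (2:ℤ) * q ^ 2 + 1 = p ^ 2 by linarith, ht]
        exact ⟨2 * t ^ 2, by ring⟩
      obtain ⟨z, hz⟩ := this
      omega
    · exact ho
  obtain ⟨k, rfl⟩ := hodd
  have hk0 : 0 ≤ k := by nlinarith
  have hqe : Even q := by
    rcases Int.even_or_odd q with he | ⟨z, hz⟩
    · exact he
    · exfalso
      subst hz
      have h4 : 4 * (k * k + k - 2 * (z * z) - 2 * z) = 2 := by linear_combination h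
      omega
  obtain ⟨e, he⟩ := hqe
  have hq2 : q = 2 * e := by linarith
  subst hq2
  have hkey : 2 * e ^ 2 = k * (k + 1) := by nlinarith [h]
  have hcop : IsCoprime k (k + 1) := ⟨-1, 1, by ring⟩
  have fix_sign : ∀ c' d' : ℤ, c' ^ 2 + 2 * d' ^ 2 = 2 * k + 1 → (2 * c' * d') ^ 2 = (2 * e) ^ 2 →
      ∃ c d : ℤ, c ^ 2 + 2 * d ^ 2 = 2 * k + 1 ∧ 2 * c * d = 2 * e := by
    intro c' d' h1 h2
    have h3 : (2 * c' * d' - 2 * e) * (2 * c' * d' + 2 * e) = 0 := by linear_combination h2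
    rcases mul_eq_zero.mp h3 with h4 | h4
    · exact ⟨c', d', h1, by linarith⟩
    · exact ⟨c', -d', by linarith [h1], by linarith⟩
  rcases Int.even_or_odd k with ⟨m, hm⟩ | ⟨m, hm⟩
  · have hm' : k = 2 * m := by linarith
    subst hm'
    have hprod : m * (2 * m + 1) = e ^ 2 := by nlinarith [hkey]
    have hcop2 : IsCoprime m (2 * m + 1) := ⟨-2, 1, by ring⟩
    obtain ⟨a0, ha0⟩ := Int.sq_of_isCoprime (c := e) hcop2 hprod
    obtain ⟨d', hd'⟩ := sq_of_nonneg_or m (by linarith) a0 ha0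
    obtain ⟨a1, ha1⟩ := Int.sq_of_isCoprime (c := e) hcop2.symm (by linear_combination hprod)
    obtain ⟨c', hc'⟩ := sq_of_nonneg_or (2 * m + 1) (by linarith) a1 ha1
    refine fix_sign c' d' (by linarith [hc', hd']) ?_
    have : (2 * c' * d') ^ 2 = 4 * ((2 * m + 1) * m) := by
      rw [show (2 * c' * d') ^ 2 = 4 * (c' ^ 2 * d' ^ 2) by ring, ← hc', ← hd']
    rw [this]
    nlinarith [hprod]
  · have hm' : k = 2 * m + 1 := by linarith
    subst hm'
    have hprod : (2 * m + 1) * (m + 1) = e ^ 2 := by nlinarith [hkey]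
    have hcop2 : IsCoprime (2 * m + 1) (m + 1) := ⟨-1, 2, by ring⟩
    obtain ⟨a0, ha0⟩ := Int.sq_of_isCoprime (c := e) hcop2 hprod
    obtain ⟨c', hc'⟩ := sq_of_nonneg_or (2 * m + 1) (by linarith) a0 ha0
    obtain ⟨a1, ha1⟩ := Int.sq_of_isCoprime (c := e) hcop2.symm (by linear_combination hprod)
    obtain ⟨d', hd'⟩ := sq_of_nonneg_or (m + 1) (by linarith) a1 ha1
    refine fix_sign c' d' (by linarith [hc', hd']) ?_
    have : (2 * c' * d') ^ 2 = 4 * ((2 * m + 1) * (m + 1)) := by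
      rw [show (2 * c' * d') ^ 2 = 4 * (c' ^ 2 * d' ^ 2) by ring, ← hc', ← hd']
    rw [this]
    nlinarith [hprod]

lemma pell_sq (p q : ℤ) (h : p ^ 2 - 2 * q ^ 2 = 1) :
    ∃ c d : ℤ, (c ^ 2 + 2 * d ^ 2 = p ∧ 2 * c * d = q) ∨
      (c ^ 2 + 2 * d ^ 2 = -p ∧ 2 * c * d = -q) := by
  rcases lt_trichotomy p 0 with hp | hp | hp
  · obtain ⟨c, d, h1, h2⟩ := pell_sq_pos (-p) (-q) (by linarith) (by nlinarith)
    exact ⟨c, d, Or.inr ⟨by linarith, h2⟩⟩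
  · exfalso; nlinarith
  · obtain ⟨c, d, h1, h2⟩ := pell_sq_pos p q hp h
    exact ⟨c, d, Or.inl ⟨h1, h2⟩⟩
open NumberField
section NF
variable {K : Type*} [Field K] [NumberField K]

noncomputable def uMap (e : K ≃ₐ[ℚ] K) : (𝓞 K)ˣ →* (𝓞 K)ˣ :=
  Units.map ((RingOfIntegers.mapRingEquiv e : 𝓞 K ≃+* 𝓞 K) : 𝓞 K →+* 𝓞 K).toMonoidHom

lemma uMap_val (e : K ≃ₐ[ℚ] K) (u : (𝓞 K)ˣ) :
    algebraMap (𝓞 K) K ((uMap e u : (𝓞 K)ˣ) : 𝓞 K) = e (algebraMap (𝓞 K) K (u : 𝓞 K)) := rfl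

lemma unit_eq_of_val {z w : (𝓞 K)ˣ}
    (h : algebraMap (𝓞 K) K (z : 𝓞 K) = algebraMap (𝓞 K) K (w : 𝓞 K)) : z = w :=
  Units.ext (RingOfIntegers.coe_injective h)

lemma val_neg_one : algebraMap (𝓞 K) K ((((-1 : (𝓞 K)ˣ) : (𝓞 K)ˣ)) : 𝓞 K) = -1 := by
  simp

lemma rou_in_H {r s : K} (hr : r ^ 2 = -3) (hs : s ^ 2 = 2)
    (hgen : ∀ x : K, x ∈ Algebra.adjoin ℚ ({r, s} : Set K))
    (H : Subgroup (𝓞 K)ˣ)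
    (hH : ∀ v : (𝓞 K)ˣ,
      (algebraMap (𝓞 K) K (v : 𝓞 K) ∈ Algebra.adjoin ℚ ({s} : Set K) ∨
        algebraMap (𝓞 K) K (v : 𝓞 K) ∈ Algebra.adjoin ℚ ({r} : Set K) ∨
        algebraMap (𝓞 K) K (v : 𝓞 K) ∈ Algebra.adjoin ℚ ({r * s} : Set K)) → v ∈ H)
    (σ τ : K ≃ₐ[ℚ] K) (hσr : σ r = -r) (hσs : σ s = s) (hτr : τ r = r) (hτs : τ s = -s)
    (ζ : (𝓞 K)ˣ) (n : ℕ) (hn : 0 < n)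
    (hζ : (algebraMap (𝓞 K) K (ζ : 𝓞 K)) ^ n = 1) : ζ ∈ H := by
  obtain ⟨φ⟩ : Nonempty (K →+* ℂ) := inferInstance
  have hσσ : ∀ x, σ (σ x) = x :=
    hom_ext hr hs hgen ((σ : K →+* K).comp (σ : K →+* K)) (RingHom.id K)
      (by simp [hσr]) (by simp [hσs])
  have hττ : ∀ x, τ (τ x) = x :=
    hom_ext hr hs hgen ((τ : K →+* K).comp (τ : K →+* K)) (RingHom.id K)
      (by simp [hτr]) (by simp [hτs])
  have hστ : ∀ x, σ (τ x) = τ (σ x) :=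
    hom_ext hr hs hgen ((σ : K →+* K).comp (τ : K →+* K)) ((τ : K →+* K).comp (σ : K →+* K))
      (by simp [hσr, hτr]) (by simp [hσs, hτs])
  set Z := algebraMap (𝓞 K) K (ζ : 𝓞 K) with hZ
  -- Step 1 : ζ * σ ζ = 1
  have hyval : algebraMap (𝓞 K) K (((ζ * uMap σ ζ) : (𝓞 K)ˣ) : 𝓞 K) = Z * σ Z := by
    rw [Units.val_mul, map_mul, uMap_val]
  have hy1 : ζ * uMap σ ζ = 1 := by
    apply unit_eq_of_val
    rw [hyval, Units.val_one, map_one]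
    have hσpow : σ Z ^ n = 1 := by rw [← map_pow, hζ, map_one]
    have hpow : (Z * σ Z) ^ n = 1 := by
      rw [mul_pow, hζ, hσpow, mul_one]
    have hφ : φ (Z * σ Z) = (Complex.normSq (φ Z) : ℝ) := by
      rw [map_mul, conj_phi hr hs hgen σ hσr hσs φ Z, Complex.mul_conj]
    have htn : (Complex.normSq (φ Z) : ℝ) ^ n = 1 := by
      have := congrArg φ hpow
      rw [map_pow, map_one, hφ] at this
      exact_mod_cast this
    have ht1 : (Complex.normSq (φ Z) : ℝ) = 1 := by
      set t : ℝ := (Complex.normSq (φ Z) : ℝ) with hts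
      have ht0 : 0 ≤ t := Complex.normSq_nonneg _
      rcases lt_trichotomy t 1 with hlt | heq | hgt
      · exfalso
        have := pow_lt_one₀ ht0 hlt hn.ne'
        rw [htn] at this
        exact lt_irrefl 1 this
      · exact heq
      · exfalso
        have := one_lt_pow₀ hgt hn.ne'
        rw [htn] at this
        exact lt_irrefl 1 this
    apply φ.injective
    rw [hφ, map_one, ht1]
    norm_num
  have hσζ : uMap σ ζ = ζ⁻¹ := by
    rw [eq_inv_iff_mul_eq_one, mul_comm]
    exact hy1
  -- Step 2 : ζ * τ ζ ∈ H
  have h1H : ζ * uMap τ ζ ∈ H := by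
    apply hH
    refine Or.inr (Or.inl ?_)
    apply fixed_r hr hs hgen τ hτr hτs
    rw [Units.val_mul, map_mul, uMap_val, map_mul, hττ]
    ring
  -- Step 3 : ζ * τ (σ ζ) ∈ H
  obtain ⟨ρ, hρr, hρs⟩ := exists_conj hr hs hgen (-r) (-s) (Or.inr rfl) (Or.inr rfl)
  have hρcomp : ∀ x, ρ x = τ (σ x) :=
    hom_ext hr hs hgen (ρ : K →+* K) ((τ : K →+* K).comp (σ : K →+* K))
      (by simp [hρr, hσr, hτr]) (by simp [hρs, hσs, hτs])
  have h2H : ζ * uMap τ (uMap σ ζ) ∈ H := by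
    apply hH
    refine Or.inr (Or.inr ?_)
    apply fixed_rs hr hs hgen ρ hρr hρs
    rw [Units.val_mul, map_mul, uMap_val, uMap_val]
    generalize (algebraMap (𝓞 K) K) ((ζ : 𝓞 K)) = W
    rw [map_mul, hρcomp, hρcomp, hστ (σ W), hσσ, hττ]
    ring
  have hsq : ζ ^ 2 ∈ H := by
    have : (ζ * uMap τ ζ) * (ζ * uMap τ (uMap σ ζ)) = ζ ^ 2 := by
      rw [hσζ, map_inv, mul_mul_mul_comm]
      simp [sq]
    rw [← this]
    exact mul_mem h1H h2H
  -- Step 4 : two-power roots of unity are ±1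
  have h2pow : ∀ (k : ℕ) (z : (𝓞 K)ˣ),
      (algebraMap (𝓞 K) K (z : 𝓞 K)) ^ (2 ^ k) = 1 → z = 1 ∨ z = -1 := by
    intro k
    induction k with
    | zero =>
      intro z hz
      left
      apply unit_eq_of_val
      rw [Units.val_one, map_one]
      simpa using hz
    | succ k ih =>
      intro z hz
      have hz2 : (algebraMap (𝓞 K) K ((z ^ 2 : (𝓞 K)ˣ) : 𝓞 K)) ^ (2 ^ k) = 1 := by
        rw [Units.val_pow_eq_pow_val, map_pow, ← pow_mul]
        rw [show 2 * 2 ^ k = 2 ^ (k + 1) by ring]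
        exact hz
      rcases ih (z ^ 2) hz2 with h | h
      · have hval : (algebraMap (𝓞 K) K (z : 𝓞 K)) ^ 2 = 1 := by
          have := congrArg (fun w : (𝓞 K)ˣ => algebraMap (𝓞 K) K (w : 𝓞 K)) h
          simpa [map_pow] using this
        have : (algebraMap (𝓞 K) K (z : 𝓞 K) - 1) * (algebraMap (𝓞 K) K (z : 𝓞 K) + 1) = 0 := by
          linear_combination hval
        rcases mul_eq_zero.mp this with h' | h'
        · left
          apply unit_eq_of_val
          rw [Units.val_one, map_one]
          linear_combination h'
        · right
          apply unit_eq_of_val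
          rw [val_neg_one]
          linear_combination h'
      · exfalso
        have hval : (algebraMap (𝓞 K) K (z : 𝓞 K)) ^ 2 = -1 := by
          have := congrArg (fun w : (𝓞 K)ˣ => algebraMap (𝓞 K) K (w : 𝓞 K)) h
          simpa [map_pow, val_neg_one] using this
        exact no_sqrt_neg_one hr hs hgen _ hval
  -- Step 5 : conclude
  have hm1H : (-1 : (𝓞 K)ˣ) ∈ H := by
    apply hH
    left
    rw [val_neg_one]
    exact Subalgebra.neg_mem _ (Subalgebra.one_mem _)
  set k := n.factorization 2 with hk
  set m := n / 2 ^ k with hm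
  have hnm : 2 ^ k * m = n := Nat.ordProj_mul_ordCompl_eq_self n 2
  have hmodd : ¬ 2 ∣ m := Nat.not_dvd_ordCompl Nat.prime_two hn.ne'
  have hζm : (algebraMap (𝓞 K) K ((ζ ^ m : (𝓞 K)ˣ) : 𝓞 K)) ^ (2 ^ k) = 1 := by
    rw [Units.val_pow_eq_pow_val, map_pow, ← pow_mul, mul_comm m (2 ^ k), hnm]
    exact hζ
  obtain ⟨t, htm⟩ : ∃ t, m = 2 * t + 1 := ⟨m / 2, by omega⟩
  have key : ∀ w : (𝓞 K)ˣ, ζ ^ m = w → w ∈ H → ζ ∈ H := by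
    intro w hw hwH
    have : ζ = w * ((ζ ^ 2) ^ t)⁻¹ := by
      rw [← hw, htm]
      group
    rw [this]
    exact mul_mem hwH (inv_mem (pow_mem hsq t))
  rcases h2pow k (ζ ^ m) hζm with h | h
  · exact key 1 h (one_mem H)
  · exact key (-1) h hm1H

end NF
open NumberField

lemma int_descent (p q : ℚ) (P Q : ℤ) (hP : (P : ℚ) = 2 * p) (hQ : (Q : ℚ) = 4 * q)
    (hrel : p ^ 2 - 2 * q ^ 2 = 1) : ∃ p0 q0 : ℤ, ((p0 : ℚ) = p ∧ (q0 : ℚ) = q) ∧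
      p0 ^ 2 - 2 * q0 ^ 2 = 1 := by
  have h8 : 2 * P ^ 2 - Q ^ 2 = 8 := by
    have : ((2 * P ^ 2 - Q ^ 2 : ℤ) : ℚ) = 8 := by
      push_cast
      linear_combination (2 * ((P : ℚ) + 2 * p)) * hP - (((Q : ℚ) + 4 * q)) * hQ + 8 * hrel
    exact_mod_cast this
  have hQe : Even Q := by
    have h1 : Even (Q ^ 2) := ⟨P ^ 2 - 4, by linarith⟩
    exact (Int.even_pow.mp h1).1
  obtain ⟨t, ht⟩ := hQe
  have hQ2 : Q ^ 2 = 4 * t ^ 2 := by rw [ht]; ring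
  have hPe : Even P := by
    have h1 : Even (P ^ 2) := ⟨t ^ 2 + 2, by linarith⟩
    exact (Int.even_pow.mp h1).1
  obtain ⟨p0, hp0⟩ := hPe
  have hP2 : P ^ 2 = 4 * p0 ^ 2 := by rw [hp0]; ring
  have hte : Even t := by
    have h1 : Even (t ^ 2) := ⟨p0 ^ 2 - 1, by linarith⟩
    exact (Int.even_pow.mp h1).1
  obtain ⟨q0, hq0⟩ := hte
  have ht2 : t ^ 2 = 4 * q0 ^ 2 := by rw [hq0]; ring
  refine ⟨p0, q0, ⟨?_, ?_⟩, ?_⟩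
  · have : (P : ℚ) = 2 * p0 := by rw [hp0]; push_cast; ring
    rw [this] at hP; linarith
  · have : (Q : ℚ) = 4 * q0 := by rw [ht, hq0]; push_cast; ring
    rw [this] at hQ; linarith
  · linarith

section Infra7
variable {K : Type*} [Field K] [CharZero K]

lemma pair_mem_adjoin (p q : ℚ) (t : K) : (p : K) + q * t ∈ Algebra.adjoin ℚ ({t} : Set K) := by
  rw [show (p : K) + q * t = algebraMap ℚ K p + q • t by
    rw [eq_ratCast (algebraMap ℚ K) p, Rat.smul_def]]
  exact add_mem (Subalgebra.algebraMap_mem _ p)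
    (Subalgebra.smul_mem _ (Algebra.self_mem_adjoin_singleton ℚ t) q)

lemma intCast_isIntegral (z : ℤ) : IsIntegral ℤ ((z : K)) := by
  rw [show ((z : K)) = algebraMap ℤ K z by rw [eq_intCast (algebraMap ℤ K) z]]
  exact isIntegral_algebraMap

lemma s_isIntegral {s : K} (hs : s ^ 2 = 2) : IsIntegral ℤ s := by
  refine ⟨Polynomial.X ^ 2 - Polynomial.C 2, Polynomial.monic_X_pow_sub_C 2 (by norm_num), ?_⟩
  simp [Polynomial.eval₂_sub, hs]

end Infra7
open NumberField

/-- For the imaginary biquadratic field `K = ℚ(√-3, √2)`, the unit group `E(K)` equals the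
product `E(ℚ(√2))·E(ℚ(√-3))·E(ℚ(√-6))` of the unit groups of its three quadratic
subfields; i.e. the unit index `q(K/ℚ)` equals 1. -/
theorem stmt_14 (K : Type*) [Field K] [NumberField K] (r s : K)
    (hr : r ^ 2 = -3) (hs : s ^ 2 = 2)
    (hgen : ∀ x : K, x ∈ Algebra.adjoin ℚ ({r, s} : Set K)) :
    Subgroup.closure {v : (𝓞 K)ˣ |
        algebraMap (𝓞 K) K (v : 𝓞 K) ∈ Algebra.adjoin ℚ ({s} : Set K) ∨
        algebraMap (𝓞 K) K (v : 𝓞 K) ∈ Algebra.adjoin ℚ ({r} : Set K) ∨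
        algebraMap (𝓞 K) K (v : 𝓞 K) ∈ Algebra.adjoin ℚ ({r * s} : Set K)} = ⊤ := by
  rw [Subgroup.eq_top_iff']
  intro u
  set H : Subgroup (𝓞 K)ˣ := Subgroup.closure {v : (𝓞 K)ˣ |
        algebraMap (𝓞 K) K (v : 𝓞 K) ∈ Algebra.adjoin ℚ ({s} : Set K) ∨
        algebraMap (𝓞 K) K (v : 𝓞 K) ∈ Algebra.adjoin ℚ ({r} : Set K) ∨
        algebraMap (𝓞 K) K (v : 𝓞 K) ∈ Algebra.adjoin ℚ ({r * s} : Set K)} with hHdef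
  have hH : ∀ v : (𝓞 K)ˣ,
      (algebraMap (𝓞 K) K (v : 𝓞 K) ∈ Algebra.adjoin ℚ ({s} : Set K) ∨
        algebraMap (𝓞 K) K (v : 𝓞 K) ∈ Algebra.adjoin ℚ ({r} : Set K) ∨
        algebraMap (𝓞 K) K (v : 𝓞 K) ∈ Algebra.adjoin ℚ ({r * s} : Set K)) → v ∈ H :=
    fun v hv => Subgroup.subset_closure hv
  obtain ⟨σ, hσr, hσs⟩ := exists_conj hr hs hgen (-r) s (Or.inr rfl) (Or.inl rfl)
  obtain ⟨τ, hτr, hτs⟩ := exists_conj hr hs hgen r (-s) (Or.inl rfl) (Or.inr rfl)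
  have hσσ : ∀ x, σ (σ x) = x :=
    hom_ext hr hs hgen ((σ : K →+* K).comp (σ : K →+* K)) (RingHom.id K)
      (by simp [hσr]) (by simp [hσs])
  have hττ : ∀ x, τ (τ x) = x :=
    hom_ext hr hs hgen ((τ : K →+* K).comp (τ : K →+* K)) (RingHom.id K)
      (by simp [hτr]) (by simp [hτs])
  have hστ : ∀ x, σ (τ x) = τ (σ x) :=
    hom_ext hr hs hgen ((σ : K →+* K).comp (τ : K →+* K)) ((τ : K →+* K).comp (σ : K →+* K))
      (by simp [hσr, hτr]) (by simp [hσs, hτs])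
  obtain ⟨φ⟩ : Nonempty (K →+* ℂ) := inferInstance
  set U : K := algebraMap (𝓞 K) K (u : 𝓞 K) with hU
  set a : (𝓞 K)ˣ := u * uMap σ u with ha
  have haval : algebraMap (𝓞 K) K (a : 𝓞 K) = U * σ U := by
    rw [ha, Units.val_mul, map_mul, uMap_val]
  have hAfix : σ (U * σ U) = U * σ U := by rw [map_mul, hσσ]; ring
  set N : (𝓞 K)ˣ := a * uMap τ a with hN
  have hNval : algebraMap (𝓞 K) K (N : 𝓞 K) = (U * σ U) * τ (U * σ U) := by
    rw [hN, Units.val_mul, map_mul, uMap_val, haval]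
  -- N is rational
  have hNfixσ : σ (algebraMap (𝓞 K) K (N : 𝓞 K)) = algebraMap (𝓞 K) K (N : 𝓞 K) := by
    rw [hNval, map_mul, hAfix, hστ, hAfix]
  have hNfixτ : τ (algebraMap (𝓞 K) K (N : 𝓞 K)) = algebraMap (𝓞 K) K (N : 𝓞 K) := by
    rw [hNval, map_mul, hττ]
    ring
  obtain ⟨qN, hqN⟩ := fixed_rat hr hs hgen σ τ hσr hσs hτr hτs _ hNfixσ hNfixτ
  -- N = 1
  have hNN : algebraMap (𝓞 K) K (N : 𝓞 K) * algebraMap (𝓞 K) K ((N⁻¹ : (𝓞 K)ˣ) : 𝓞 K) = 1 := by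
    rw [← map_mul, ← Units.val_mul]
    simp
  have hqN0 : qN ≠ 0 := by
    intro h0
    rw [hqN, h0] at hNN
    simp at hNN
  have hNinvval : algebraMap (𝓞 K) K ((N⁻¹ : (𝓞 K)ˣ) : 𝓞 K) = ((qN⁻¹ : ℚ) : K) := by
    rw [hqN] at hNN
    rw [Rat.cast_inv]
    exact eq_inv_of_mul_eq_one_left (by rw [mul_comm]; exact hNN)
  obtain ⟨nZ, hnZ⟩ := rat_integral (K := K) (q := qN) (by rw [← hqN]; exact RingOfIntegers.isIntegral_coe _)
  obtain ⟨mZ, hmZ⟩ := rat_integral (K := K) (q := qN⁻¹)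
    (by rw [← hNinvval]; exact RingOfIntegers.isIntegral_coe _)
  have hnm1 : nZ * mZ = 1 := by
    have : ((nZ * mZ : ℤ) : ℚ) = 1 := by
      push_cast [hnZ, hmZ]
      field_simp
    exact_mod_cast this
  have hφN : φ (algebraMap (𝓞 K) K (N : 𝓞 K))
      = ((Complex.normSq (φ U) * Complex.normSq (φ (τ U)) : ℝ) : ℂ) := by
    rw [hNval, map_mul, map_mul, conj_phi hr hs hgen σ hσr hσs φ U, Complex.mul_conj]
    rw [map_mul τ U (σ U), map_mul φ (τ U) (τ (σ U)), ← hστ U,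
      conj_phi hr hs hgen σ hσr hσs φ (τ U), Complex.mul_conj, ← Complex.ofReal_mul]
  have hqNpos : 0 ≤ qN := by
    have h1 : ((qN : ℝ) : ℂ) = ((Complex.normSq (φ U) * Complex.normSq (φ (τ U)) : ℝ) : ℂ) := by
      rw [Complex.ofReal_ratCast, ← hφN, hqN, map_ratCast]
    have h2 : (qN : ℝ) = Complex.normSq (φ U) * Complex.normSq (φ (τ U)) :=
      Complex.ofReal_inj.mp h1
    have h3 : (0 : ℝ) ≤ (qN : ℝ) := by
      rw [h2]
      exact mul_nonneg (Complex.normSq_nonneg _) (Complex.normSq_nonneg _)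
    exact_mod_cast h3
  have hnZ1 : nZ = 1 := by
    rcases Int.mul_eq_one_iff_eq_one_or_neg_one.mp hnm1 with ⟨h1, -⟩ | ⟨h1, -⟩
    · exact h1
    · exfalso
      rw [h1] at hnZ
      rw [← hnZ] at hqNpos
      norm_num at hqNpos
  have hqN1 : qN = 1 := by rw [← hnZ, hnZ1]; norm_num
  have hNone : N = 1 := by
    apply unit_eq_of_val
    rw [hqN, hqN1, Units.val_one, map_one]
    norm_num
  -- coordinates of the norm to Q(s)
  obtain ⟨p', b', q', d', hA⟩ := coords_exist hr hs hgen (U * σ U)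
  have hσAexp : σ ((p' : K) + b' * r + q' * s + d' * (r * s))
      = (p' : K) + b' * (-r) + q' * s + d' * (-r * s) := by
    simp [map_add, map_mul, hσr, hσs]
  have hbd0 : b' = 0 ∧ d' = 0 := by
    have h0 : ((0 : ℚ) : K) + ((2 * b' : ℚ) : K) * r + ((0 : ℚ) : K) * s
        + ((2 * d' : ℚ) : K) * (r * s) = 0 := by
      have := hAfix
      rw [hA, hσAexp] at this
      push_cast
      linear_combination -this
    obtain ⟨-, e2, -, e4⟩ := coords_unique hr hs _ _ _ _ h0
    exact ⟨by linarith, by linarith⟩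
  have hA2 : U * σ U = (p' : K) + q' * s := by
    rw [hA, hbd0.1, hbd0.2]
    push_cast
    ring
  have hτA : τ (U * σ U) = (p' : K) - q' * s := by
    rw [hA2]
    simp [map_add, map_mul, map_ratCast, hτs]
    ring
  -- Pell relation
  have hNval1 : (U * σ U) * τ (U * σ U) = 1 := by
    rw [← hNval, hNone, Units.val_one, map_one]
  have hrelK : (((p' : K)) + q' * s) * (((p' : K)) - q' * s) = 1 := by
    rw [← hA2, ← hτA]
    exact hNval1
  have hrel : p' ^ 2 - 2 * q' ^ 2 = 1 := by
    have h1 : ((p' ^ 2 - 2 * q' ^ 2 : ℚ) : K) = ((1 : ℚ) : K) := by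
      push_cast
      linear_combination hrelK + (q' : K) ^ 2 * hs
    exact_mod_cast h1
  -- integrality of 2p' and 4q'
  have hsum : ((2 * p' : ℚ) : K) = algebraMap (𝓞 K) K (a : 𝓞 K)
      + algebraMap (𝓞 K) K ((uMap τ a : (𝓞 K)ˣ) : 𝓞 K) := by
    rw [uMap_val, haval, hτA, hA2]
    push_cast
    ring
  obtain ⟨P, hP⟩ := rat_integral (K := K) (q := 2 * p')
    (by rw [hsum]; exact (RingOfIntegers.isIntegral_coe _).add (RingOfIntegers.isIntegral_coe _))
  have hdiff : ((4 * q' : ℚ) : K) = (algebraMap (𝓞 K) K (a : 𝓞 K)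
      - algebraMap (𝓞 K) K ((uMap τ a : (𝓞 K)ˣ) : 𝓞 K)) * s := by
    rw [uMap_val, haval, hτA, hA2]
    push_cast
    linear_combination (-2 * (q' : K)) * hs
  obtain ⟨Q, hQ⟩ := rat_integral (K := K) (q := 4 * q')
    (by rw [hdiff]
        exact ((RingOfIntegers.isIntegral_coe _).sub (RingOfIntegers.isIntegral_coe _)).mul
          (s_isIntegral hs))
  obtain ⟨p0, q0, ⟨hp0, hq0⟩, hrel0⟩ := int_descent p' q' P Q hP hQ hrel
  obtain ⟨c, d, hcd⟩ := pell_sq p0 q0 hrel0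
  -- the unit X = c + d√2
  set m : ℤ := c ^ 2 - 2 * d ^ 2 with hm
  have hm2 : m ^ 2 = 1 := by
    rcases hcd with ⟨h1, h2⟩ | ⟨h1, h2⟩
    · linear_combination (c^2+2*d^2+p0) * h1 - 2*(2*c*d+q0) * h2 + hrel0
    · linear_combination (c^2+2*d^2-p0) * h1 - 2*(2*c*d-q0) * h2 + hrel0
  have hxyK : (((c : K)) + (d : K) * s) * (((m : K)) * ((c : K) - (d : K) * s)) = 1 := by
    have hm2K : ((m : K)) ^ 2 = 1 := by
      have : ((m ^ 2 : ℤ) : K) = ((1 : ℤ) : K) := by rw [hm2]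
      push_cast at this
      exact this
    have hmK : ((m : K)) = (c : K) ^ 2 - 2 * (d : K) ^ 2 := by rw [hm]; push_cast; ring
    linear_combination hm2K - ((m : K)) * (d : K) ^ 2 * hs - ((m : K)) * hmK
  have hxInt : IsIntegral ℤ ((c : K) + (d : K) * s) :=
    (intCast_isIntegral c).add ((intCast_isIntegral d).mul (s_isIntegral hs))
  have hyInt : IsIntegral ℤ ((m : K) * ((c : K) - (d : K) * s)) :=
    (intCast_isIntegral m).mul ((intCast_isIntegral c).sub
      ((intCast_isIntegral d).mul (s_isIntegral hs)))
  set X : (𝓞 K)ˣ :=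
    { val := ⟨(c : K) + (d : K) * s, hxInt⟩
      inv := ⟨(m : K) * ((c : K) - (d : K) * s), hyInt⟩
      val_inv := by
        apply RingOfIntegers.ext
        exact hxyK
      inv_val := by
        apply RingOfIntegers.ext
        show ((m : K) * ((c : K) - (d : K) * s)) * ((c : K) + (d : K) * s) = 1
        rw [mul_comm]
        exact hxyK } with hX
  have hXval : algebraMap (𝓞 K) K (X : 𝓞 K) = (c : K) + (d : K) * s :=
    RingOfIntegers.map_mk _ _
  have hXH : X ∈ H := by
    apply hH
    left
    rw [hXval]
    have : ((c : K)) + (d : K) * s = (((c : ℚ) : K)) + ((d : ℚ) : K) * s := by push_cast; ring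
    rw [this]
    exact pair_mem_adjoin _ _ s
  have hX2val : (algebraMap (𝓞 K) K (X : 𝓞 K)) ^ 2
      = ((c ^ 2 + 2 * d ^ 2 : ℤ) : K) + ((2 * c * d : ℤ) : K) * s := by
    rw [hXval]
    push_cast
    linear_combination (d : K) ^ 2 * hs
  -- the common final argument
  have hfinal : ∀ ε : (𝓞 K)ˣ, ε = 1 ∨ ε = -1 → X ^ 2 = ε * a → u ∈ H := by
    intro ε hε hX2
    set ζu : (𝓞 K)ˣ := u * (uMap σ u)⁻¹ with hζu
    have hu2 : u ^ 2 = a * ζu := by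
      rw [ha, hζu, mul_mul_mul_comm]
      simp [sq]
    have hζval : algebraMap (𝓞 K) K (ζu : 𝓞 K)
        = U * σ (algebraMap (𝓞 K) K ((u⁻¹ : (𝓞 K)ˣ) : 𝓞 K)) := by
      rw [hζu, Units.val_mul, map_mul, ← map_inv (uMap σ) u, uMap_val]
    have hUinv : U * algebraMap (𝓞 K) K ((u⁻¹ : (𝓞 K)ˣ) : 𝓞 K) = 1 := by
      rw [hU, ← map_mul, ← Units.val_mul]
      simp
    have hnorm : ∀ ψ : K →+* ℂ, ‖ψ (algebraMap (𝓞 K) K (ζu : 𝓞 K))‖ = 1 := by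
      intro ψ
      rw [hζval, map_mul, norm_mul, conj_phi hr hs hgen σ hσr hσs ψ _, RCLike.norm_conj,
        ← norm_mul, ← map_mul, hUinv, map_one, norm_one]
    obtain ⟨n, hn, hζn⟩ := NumberField.Embeddings.pow_eq_one_of_norm_eq_one K ℂ
      (RingOfIntegers.isIntegral_coe ((ζu : (𝓞 K)ˣ) : 𝓞 K)) hnorm
    have hζun : ζu ^ n = 1 := by
      apply unit_eq_of_val
      rw [Units.val_pow_eq_pow_val, map_pow, hζn, Units.val_one, map_one]
    set w : (𝓞 K)ˣ := u * X⁻¹ with hw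
    have hw2 : w ^ 2 = ζu * ε⁻¹ := by
      rw [hw, mul_pow, inv_pow, hu2, hX2, mul_inv, mul_comm ε⁻¹ a⁻¹, ← mul_assoc,
        mul_right_comm a ζu a⁻¹]
      simp
    have hε2 : ε ^ 2 = 1 := by rcases hε with rfl | rfl <;> simp
    have hw4 : w ^ (4 * n) = 1 := by
      have h1 : w ^ (4 * n) = (w ^ 2) ^ (2 * n) := by
        rw [← pow_mul]
        ring_nf
      rw [h1, hw2, mul_pow, pow_mul' ζu 2 n, hζun, one_pow, one_mul, inv_pow, pow_mul ε 2 n,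
        hε2, one_pow, inv_one]
    have hwH : w ∈ H := by
      apply rou_in_H hr hs hgen H hH σ τ hσr hσs hτr hτs w (4 * n) (by positivity)
      rw [← map_pow, ← Units.val_pow_eq_pow_val, hw4, Units.val_one, map_one]
    have hu_eq : u = w * X := by rw [hw, inv_mul_cancel_right]
    rw [hu_eq]
    exact mul_mem hwH hXH
  rcases hcd with ⟨h1, h2⟩ | ⟨h1, h2⟩
  · refine hfinal 1 (Or.inl rfl) ?_
    apply unit_eq_of_val
    rw [Units.val_pow_eq_pow_val, map_pow, hX2val, Units.val_mul, Units.val_one, one_mul,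
      haval, hA2, h1, h2, ← hp0, ← hq0]
    push_cast
    ring
  · refine hfinal (-1) (Or.inr rfl) ?_
    apply unit_eq_of_val
    rw [Units.val_pow_eq_pow_val, map_pow, hX2val, Units.val_mul, map_mul, val_neg_one,
      haval, hA2, h1, h2, ← hp0, ← hq0]
    push_cast
    ring
end

section
/- If K is an imaginary quadratic field of class number 1, then the absolute value of its squarefree radicand is either 1 or a prime number; consequently, if Q(√-a) has class number 1 with a squarefree and a > 1, then a is prime. -/
set_option maxHeartbeats 1000000
open NumberField Polynomial

lemma sq_den_aux (a : ℕ) (hsf : Squarefree a) (q : ℚ) (n : ℤ)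
    (h : (a:ℚ) * q^2 = (n:ℚ)) : ∃ t : ℤ, q = (t:ℚ) := by
  have hd : (q.den:ℚ) ≠ 0 := by exact_mod_cast q.den_nz
  have h2 : (a:ℤ) * q.num^2 = n * (q.den:ℤ)^2 := by
    have h' := h
    rw [← Rat.num_div_den q] at h'
    field_simp at h'
    rw [mul_comm (n:ℤ)]
    exact_mod_cast h'
  have hdvd : (q.den:ℤ)^2 ∣ (a:ℤ) * q.num^2 := ⟨n, by linarith⟩
  have hdvd' : q.den^2 ∣ a * q.num.natAbs^2 := by
    have := Int.natAbs_dvd_natAbs.mpr hdvd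
    simpa [Int.natAbs_mul, Int.natAbs_pow] using this
  have hcop : (q.den^2).Coprime (q.num.natAbs^2) := Nat.Coprime.pow _ _ q.reduced.symm
  have hda : q.den^2 ∣ a := hcop.dvd_of_dvd_mul_right hdvd'
  have hu : q.den = 1 := Nat.isUnit_iff.mp (hsf q.den (by rwa [pow_two] at hda))
  exact ⟨q.num, by rw [← Rat.num_div_den q, hu]; simp⟩


/-- If the imaginary quadratic field `ℚ(√-a)` (`a ≥ 1` squarefree) has class number 1, then
`a` is either 1 or a prime; consequently if `a > 1` then `a` is prime. -/
theorem stmt_18 (a : ℕ) (ha : 1 ≤ a) (hsf : Squarefree a)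
    (K : Type*) [Field K] [NumberField K] (α : K) (hα : α ^ 2 = -(a : K))
    (hgen : ∀ x : K, x ∈ Algebra.adjoin ℚ ({α} : Set K))
    (h1 : NumberField.classNumber K = 1) :
    (a = 1 ∨ a.Prime) ∧ (1 < a → a.Prime) := by
  suffices main : a = 1 ∨ a.Prime by
    exact ⟨main, fun h1a => main.resolve_left (by omega)⟩
  by_contra hcon
  push_neg at hcon
  obtain ⟨ha1, hnp⟩ := hcon
  obtain ⟨p, hp, hpd⟩ := Nat.exists_prime_and_dvd ha1
  obtain ⟨c, hac⟩ := hpd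
  have hc1 : c ≠ 1 := by
    intro h
    rw [h, mul_one] at hac
    exact hnp (hac ▸ hp)
  have hc0 : c ≠ 0 := by
    intro h
    rw [h, mul_zero] at hac
    omega
  have hc2 : 2 ≤ c := by
    rcases c with _ | _ | n
    · exact absurd rfl hc0
    · exact absurd rfl hc1
    · exact Nat.le_add_left 2 n
  have hpdc : ¬ p ∣ c := by
    intro hdc
    have hppa : p * p ∣ a := by
      rw [hac]
      exact mul_dvd_mul_left p hdc
    exact absurd (Nat.isUnit_iff.mp (hsf p hppa)) hp.one_lt.ne'
  have hQinj : Function.Injective (Rat.cast : ℚ → K) := Rat.cast_injective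
  -- uniqueness of coordinates
  have uniq : ∀ c d c' d' : ℚ, (c:K) + (d:K) * α = (c':K) + (d':K) * α → c = c' ∧ d = d' := by
    intro c d c' d' h
    by_cases hd : d = d'
    · subst hd
      refine ⟨hQinj ?_, rfl⟩
      have := add_right_cancel h
      exact_mod_cast this
    · exfalso
      have hdq : (d - d' : ℚ) ≠ 0 := fun h0 => hd (by linarith)
      have hdd : ((d - d' : ℚ) : K) ≠ 0 := by exact_mod_cast hdq
      set r : ℚ := (c' - c)/(d - d') with hr
      have hαr : α = ((r : ℚ) : K) := by
        rw [hr]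
        push_cast
        rw [eq_div_iff (by push_cast at hdd; exact hdd)]
        linear_combination h
      have : ((r^2 + a : ℚ) : K) = 0 := by
        push_cast
        rw [← hαr, hα]; ring
      have h0 : (r^2 + a : ℚ) = 0 := by
        apply hQinj
        simpa using this
      nlinarith [sq_nonneg r, (by exact_mod_cast ha : (1:ℚ) ≤ (a:ℚ))]
  -- existence of coordinates
  have exd : ∀ x : K, ∃ c d : ℚ, x = (c : K) + (d : K) * α := by
    intro x
    have hx := hgen x
    rw [Algebra.adjoin_singleton_eq_range_aeval] at hx
    obtain ⟨p, rfl⟩ := hx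
    set q : ℚ[X] := X ^ 2 + C (a : ℚ) with hq
    have hqm : q.Monic := by
      apply Polynomial.monic_X_pow_add_C; norm_num
    have hdeg : (p %ₘ q).degree ≤ 1 := by
      have h2 := Polynomial.degree_modByMonic_lt p hqm
      have hdq : q.degree = 2 := by rw [hq]; compute_degree!
      rw [hdq] at h2
      exact Order.le_of_lt_succ h2
    refine ⟨(p %ₘ q).coeff 0, (p %ₘ q).coeff 1, ?_⟩
    conv_lhs => rw [← Polynomial.modByMonic_add_div p q]
    rw [Polynomial.eq_X_add_C_of_degree_le_one hdeg]
    have hqα : Polynomial.aeval α q = 0 := by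
      simp only [hq, map_add, map_pow, aeval_X, aeval_C, hα]
      push_cast; ring
    simp [map_add, map_mul, hqα]
    ring
  choose co1 co2 hco using exd
  have cospec : ∀ c d : ℚ, co1 ((c:K) + (d:K) * α) = c ∧ co2 ((c:K) + (d:K) * α) = d :=
    fun c d => uniq _ _ _ _ (hco _).symm
  set f : K → K := fun x => ((co1 x : ℚ) : K) - ((co2 x : ℚ) : K) * α with hfdef
  have hfco : ∀ c d : ℚ, f ((c:K) + (d:K) * α) = (c:K) - (d:K) * α := by
    intro c d
    simp only [hfdef]
    rw [(cospec c d).1, (cospec c d).2]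
  have hprod : ∀ c d e g : ℚ, ((c:K) + (d:K)*α) * ((e:K) + (g:K)*α)
      = ((c*e - a*d*g : ℚ):K) + ((c*g + d*e : ℚ):K) * α := by
    intro c d e g
    push_cast
    linear_combination ((d:K) * (g:K)) * hα
  have hfmul : ∀ x y : K, f (x * y) = f x * f y := by
    intro x y
    rw [hco x, hco y, hprod, hfco, hfco, hfco]
    push_cast
    linear_combination (-((co2 x:ℚ):K) * ((co2 y:ℚ):K)) * hα
  have hfadd : ∀ x y : K, f (x + y) = f x + f y := by
    intro x y
    rw [hco x, hco y,
      (by push_cast; ring :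
        (((co1 x :ℚ):K) + ((co2 x :ℚ):K)*α) + (((co1 y:ℚ):K) + ((co2 y:ℚ):K)*α)
          = ((co1 x + co1 y : ℚ):K) + ((co2 x + co2 y : ℚ):K)*α),
      hfco, hfco, hfco]
    push_cast; ring
  have h1K : (1:K) = ((1:ℚ):K) + ((0:ℚ):K)*α := by push_cast; ring
  have hfone : f 1 = 1 := by rw [h1K, hfco]; push_cast; ring
  have h0K : (0:K) = ((0:ℚ):K) + ((0:ℚ):K)*α := by push_cast; ring
  have hfzero : f 0 = 0 := by rw [h0K, hfco]; push_cast; ring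
  set Nf : K → ℚ := fun x => co1 x^2 + (a:ℚ) * co2 x ^2 with hNf
  have hNkey : ∀ c d : ℚ, ((c^2 + a*d^2 : ℚ):K) = ((c:K)+(d:K)*α) * f ((c:K)+(d:K)*α) := by
    intro c d
    rw [hfco]
    push_cast
    linear_combination ((d:K)^2) * hα
  have hNdef : ∀ x : K, ((Nf x : ℚ):K) = x * f x := by
    intro x
    calc ((Nf x : ℚ):K) = ((co1 x^2 + (a:ℚ)*co2 x^2 : ℚ):K) := by rw [hNf]
      _ = (((co1 x:ℚ):K) + ((co2 x:ℚ):K)*α) * f (((co1 x:ℚ):K) + ((co2 x:ℚ):K)*α) := hNkey _ _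
      _ = x * f x := by rw [← hco x]
  have hNmul : ∀ x y : K, Nf (x*y) = Nf x * Nf y := by
    intro x y
    apply hQinj
    show ((Nf (x*y):ℚ):K) = ((Nf x * Nf y : ℚ):K)
    rw [hNdef, Rat.cast_mul, hNdef, hNdef, hfmul]; ring
  have hNrat : ∀ r : ℚ, Nf ((r:ℚ):K) = r^2 := by
    intro r
    have hrd : ((r:ℚ):K) = ((r:ℚ):K) + ((0:ℚ):K)*α := by push_cast; ring
    rw [hrd]
    simp only [hNf]
    rw [(cospec r 0).1, (cospec r 0).2]
    ring
  have hNnonneg : ∀ x : K, 0 ≤ Nf x := by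
    intro x
    simp only [hNf]
    positivity
  have hNone : Nf 1 = 1 := by
    have h' : (1:K) = ((1:ℚ):K) := by push_cast; ring
    rw [h', hNrat]; norm_num
  have hσint : ∀ x : K, IsIntegral ℤ x → IsIntegral ℤ (f x) := by
    intro x hx
    let σ : K →+* K :=
      { toFun := f, map_one' := hfone, map_mul' := hfmul, map_zero' := hfzero,
        map_add' := hfadd }
    exact hx.map σ.toIntAlgHom
  have hratZ : ∀ r : ℚ, IsIntegral ℤ ((r:ℚ):K) → ∃ z : ℤ, r = (z:ℚ) := by
    intro r hr
    rw [show ((r:ℚ):K) = algebraMap ℚ K r from (eq_ratCast (algebraMap ℚ K) r).symm] at hr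
    rw [isIntegral_algebraMap_iff ((algebraMap ℚ K).injective)] at hr
    obtain ⟨z, hz⟩ := IsIntegrallyClosed.isIntegral_iff.mp hr
    exact ⟨z, by exact_mod_cast hz.symm⟩
  have hsum : ∀ x : K, x + f x = ((2 * co1 x : ℚ):K) := by
    intro x
    conv_lhs => rw [hco x]
    rw [hfco]; push_cast; ring
  have hInt : ∀ x : K, IsIntegral ℤ x →
      ∃ m s t : ℤ, Nf x = (m:ℚ) ∧ 2 * co1 x = (s:ℚ) ∧ 2 * co2 x = (t:ℚ) := by
    intro x hx
    have hfx := hσint x hx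
    obtain ⟨s, hs⟩ := hratZ (2 * co1 x) (by rw [← hsum x]; exact hx.add hfx)
    obtain ⟨m, hm⟩ := hratZ (Nf x) (by rw [hNdef x]; exact hx.mul hfx)
    simp only [hNf] at hm
    have hqa : (a:ℚ) * (2 * co2 x)^2 = ((4*m - s^2 : ℤ):ℚ) := by
      push_cast
      linear_combination 4*hm - ((s:ℚ) + 2*co1 x)*hs
    obtain ⟨t, ht⟩ := sq_den_aux a hsf (2 * co2 x) (4*m - s^2) hqa
    exact ⟨m, s, t, by rw [hNf]; exact hm, hs, ht⟩
  have hNu : ∀ u : (𝓞 K)ˣ, Nf (algebraMap (𝓞 K) K (u:𝓞 K)) = 1 := by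
    intro u
    obtain ⟨m, s, t, hm, -, -⟩ := hInt _ (RingOfIntegers.isIntegral_coe ((u:(𝓞 K)ˣ):𝓞 K))
    obtain ⟨m', s', t', hm', -, -⟩ := hInt _ (RingOfIntegers.isIntegral_coe ((u⁻¹:(𝓞 K)ˣ):𝓞 K))
    have hmul : Nf (algebraMap (𝓞 K) K ((u:(𝓞 K)ˣ):𝓞 K))
        * Nf (algebraMap (𝓞 K) K ((u⁻¹:(𝓞 K)ˣ):𝓞 K)) = 1 := by
      rw [← hNmul, ← map_mul,
        show ((u:(𝓞 K)ˣ):𝓞 K) * ((u⁻¹:(𝓞 K)ˣ):𝓞 K) = 1 from by exact_mod_cast u.mul_inv,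
        map_one, hNone]
    rw [hm, hm'] at hmul
    have hmm : m * m' = 1 := by exact_mod_cast hmul
    have hm0 : (0:ℚ) ≤ (m:ℚ) := by rw [← hm]; exact hNnonneg _
    have hm0' : 0 ≤ m := by exact_mod_cast hm0
    have hm1 : m = 1 := by
      rcases Int.isUnit_iff.mp (IsUnit.of_mul_eq_one m' hmm) with h|h <;> omega
    rw [hm, hm1]; norm_num
  -- θ : the ring of integers element corresponding to α
  have hαint : IsIntegral ℤ α := by
    refine ⟨X^2 + C (a:ℤ), monic_X_pow_add_C _ (by norm_num), ?_⟩
    simp only [eval₂_add, eval₂_X_pow, eval₂_C, hα]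
    push_cast
    ring
  set θ : 𝓞 K := ⟨α, hαint⟩ with hθdef
  have hθcoe : algebraMap (𝓞 K) K θ = α := rfl
  have hacast : ((a:ℕ):𝓞 K) = ((p:ℕ):𝓞 K) * ((c:ℕ):𝓞 K) := by
    rw [hac]; push_cast; ring
  have hθsq : θ * θ = -((a:ℕ):𝓞 K) := by
    apply NumberField.RingOfIntegers.coe_injective
    rw [map_mul, hθcoe, map_neg, map_natCast, ← pow_two, hα]
  haveI hpid : IsPrincipalIdealRing (𝓞 K) := NumberField.classNumber_eq_one_iff.mp h1
  set I : Ideal (𝓞 K) := Ideal.span {((p:ℕ):𝓞 K), θ} with hIdef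
  have hpmem : ((p:ℕ):𝓞 K) ∈ I := Ideal.subset_span (by simp)
  have hθmem : θ ∈ I := Ideal.subset_span (by simp)
  have hIle : I * I ≤ Ideal.span {((p:ℕ):𝓞 K)} := by
    rw [Ideal.mul_le]
    intro r hr s hs
    rw [hIdef, Ideal.mem_span_pair] at hr hs
    obtain ⟨x1, y1, hr⟩ := hr
    obtain ⟨x2, y2, hs⟩ := hs
    rw [Ideal.mem_span_singleton']
    refine ⟨x1*x2*((p:ℕ):𝓞 K) + x1*y2*θ + y1*x2*θ - y1*y2*((c:ℕ):𝓞 K), ?_⟩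
    linear_combination (x2*((p:ℕ):𝓞 K) + y2*θ) * hr + r * hs - y1*y2*hθsq + y1*y2*hacast
  have hge : Ideal.span {((p:ℕ):𝓞 K)} ≤ I * I := by
    rw [Ideal.span_le, Set.singleton_subset_iff]
    have hcop : Nat.Coprime p c := (Nat.Prime.coprime_iff_not_dvd hp).mpr hpdc
    have hicop : IsCoprime (p:ℤ) (c:ℤ) := by
      rw [Int.isCoprime_iff_gcd_eq_one]
      exact_mod_cast hcop
    obtain ⟨u, v, huv⟩ := hicop
    have h1' : (u:𝓞 K)*((p:ℕ):𝓞 K) + (v:𝓞 K)*((c:ℕ):𝓞 K) = 1 := by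
      exact_mod_cast congrArg (fun z : ℤ => (z : 𝓞 K)) huv
    have hpp : ((p:ℕ):𝓞 K) * ((p:ℕ):𝓞 K) ∈ I*I := Ideal.mul_mem_mul hpmem hpmem
    have hθθ : θ*θ ∈ I*I := Ideal.mul_mem_mul hθmem hθmem
    have key : ((p:ℕ):𝓞 K) = (u:𝓞 K)*(((p:ℕ):𝓞 K)*((p:ℕ):𝓞 K)) + (-(v:𝓞 K))*(θ*θ) := by
      linear_combination ((p:ℕ):𝓞 K) * h1'.symm + (v:𝓞 K)*hθsq - (v:𝓞 K)*hacast
    rw [key]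
    exact Ideal.add_mem _ (Ideal.mul_mem_left _ _ hpp) (Ideal.mul_mem_left _ _ hθθ)
  have hII : I * I = Ideal.span {((p:ℕ):𝓞 K)} := le_antisymm hIle hge
  obtain ⟨β, hβ0⟩ := Submodule.IsPrincipal.principal I
  have hβ : I = Ideal.span {β} := hβ0
  have hspan : Ideal.span {β*β} = Ideal.span {((p:ℕ):𝓞 K)} := by
    rw [← Ideal.span_singleton_mul_span_singleton, ← hβ, hII]
  obtain ⟨u, hu⟩ := Ideal.span_singleton_eq_span_singleton.mp hspan
  have hNp : Nf ((algebraMap (𝓞 K) K ((p:ℕ):𝓞 K))) = (p:ℚ)^2 := by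
    rw [map_natCast (algebraMap (𝓞 K) K) p,
      show ((p:ℕ):K) = (((p:ℕ):ℚ):K) by norm_cast]
    exact_mod_cast hNrat ((p:ℕ):ℚ)
  have hNβsq : Nf (algebraMap (𝓞 K) K β) * Nf (algebraMap (𝓞 K) K β) = (p:ℚ)^2 := by
    have h' := congrArg (fun z => Nf (algebraMap (𝓞 K) K z)) hu
    simp only [map_mul] at h'
    rw [hNmul, hNmul, hNu u, mul_one] at h'
    rw [hNp] at h'
    exact h'
  obtain ⟨m, s, t, hm, hs, ht⟩ := hInt (algebraMap (𝓞 K) K β) (RingOfIntegers.isIntegral_coe β)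
  have hmp : m = (p:ℤ) := by
    have h2 : m^2 = (p:ℤ)^2 := by
      have : (m:ℚ)^2 = (p:ℚ)^2 := by rw [← hm, pow_two, hNβsq]
      exact_mod_cast this
    have h0 : (0:ℚ) ≤ (m:ℚ) := by rw [← hm]; exact hNnonneg (algebraMap (𝓞 K) K β)
    have h0' : 0 ≤ m := by exact_mod_cast h0
    have hfact : (m - (p:ℤ)) * (m + (p:ℤ)) = 0 := by linear_combination h2
    have hp2 : 2 ≤ p := hp.two_le
    rcases mul_eq_zero.mp hfact with h | h <;> omega
  have hfin : s^2 + (a:ℤ)*t^2 = 4*(p:ℤ) := by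
    have hQ : ((s:ℚ))^2 + (a:ℚ)*(t:ℚ)^2 = 4*(p:ℚ) := by
      simp only [hNf] at hm
      rw [← hs, ← ht]
      have hmq : co1 (algebraMap (𝓞 K) K β)^2 + (a:ℚ) * co2 (algebraMap (𝓞 K) K β)^2 = (p:ℚ) := by
        rw [hm, hmp]; push_cast; ring
      linear_combination 4 * hmq
    exact_mod_cast hQ
  -- diophantine endgame
  have hA : (a:ℤ) = (p:ℤ) * (c:ℤ) := by exact_mod_cast hac
  have hp2 : (2:ℤ) ≤ (p:ℤ) := by exact_mod_cast hp.two_le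
  have hc2' : (2:ℤ) ≤ (c:ℤ) := by exact_mod_cast hc2
  have hsqp : ∀ k : ℤ, k^2 ≠ (p:ℤ) := by
    intro k hk
    have hk' : k.natAbs * k.natAbs = p := by
      have : (k.natAbs : ℤ) * (k.natAbs : ℤ) = (p:ℤ) := by
        rw [Int.natAbs_mul_self']
        linear_combination hk
      exact_mod_cast this
    rcases (Nat.Prime.eq_one_or_self_of_dvd hp k.natAbs ⟨k.natAbs, hk'.symm⟩) with h | h
    · rw [h] at hk'; omega
    · rw [h] at hk'; nlinarith [hp.two_le]
  have htcases : t = 0 ∨ t^2 = 1 ∨ 4 ≤ t^2 := by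
    rcases le_or_gt t (-2) with h | h
    · right; right; nlinarith
    rcases le_or_gt 2 t with h2 | h2
    · right; right; nlinarith
    interval_cases t
    · right; left; norm_num
    · left; rfl
    · right; left; norm_num
  rcases htcases with h | h | h
  · -- t = 0 : s^2 = 4p
    subst h
    have hs4 : s^2 = 4*(p:ℤ) := by nlinarith [hfin]
    have hev2 : Even (s^2) := ⟨2*(p:ℤ), by linarith⟩
    have hev : Even s := (Int.even_pow.mp hev2).1
    obtain ⟨k, hk⟩ := hev
    have h4 : 4*k^2 = 4*(p:ℤ) := by linear_combination hs4 - (s + k + k)*hk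
    exact hsqp k (by linarith)
  · -- t^2 = 1 : s^2 = p(4 - c)
    have hs2 : s^2 = (p:ℤ)*(4 - (c:ℤ)) := by
      rw [h, hA] at hfin
      linear_combination hfin
    have hcle : (c:ℤ) ≤ 4 := by nlinarith [sq_nonneg s]
    have hc4 : c ≤ 4 := by exact_mod_cast hcle
    interval_cases c
    · -- c = 2
      have hs22 : s^2 = 2*(p:ℤ) := by push_cast at hs2; linarith
      have hev2 : Even (s^2) := ⟨(p:ℤ), by linarith⟩
      have hev : Even s := (Int.even_pow.mp hev2).1
      obtain ⟨k, hk⟩ := hev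
      have h6 : 2*(p:ℤ) = 2*(2*k^2) := by linear_combination -hs22 + (s+k+k)*hk
      have h2p : (2:ℤ) ∣ (p:ℤ) := ⟨k^2, by linarith⟩
      have h2p' : 2 ∣ p := by exact_mod_cast h2p
      have hp2' : p = 2 := ((Nat.prime_dvd_prime_iff_eq Nat.prime_two hp).mp h2p').symm
      have ha4 : a = 4 := by rw [hac, hp2']
      have := Nat.isUnit_iff.mp (hsf 2 (by rw [ha4]; norm_num))
      omega
    · -- c = 3
      have hs23 : s^2 = (p:ℤ) := by push_cast at hs2; linarith
      exact hsqp s hs23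
    · -- c = 4
      have := Nat.isUnit_iff.mp (hsf 2 ⟨p, by omega⟩)
      omega
  · -- 4 ≤ t^2
    have h2pa : 2*(p:ℤ) ≤ (a:ℤ) := by nlinarith [hA, hp2, hc2']
    have hcontra : (0:ℤ) ≤ (a:ℤ)*(t^2 - 4) := mul_nonneg (by positivity) (by linarith)
    linarith [hfin, sq_nonneg s]
end
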